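/- arXiv:1401.7569 — 7 statements merged into one kernel-verified Lean document; each statement's English description precedes it below -/
import Mathlib

section
/- For any nonzero vectors p, q in a Euclidean space, letting p̂ = p/|p| and q̂ = q/|q|, we have |p̂ - ⟨p̂, q̂⟩ q̂| ≤ |p - q|/|q|. -/
open Set Metric Filter
open scoped ENNReal Topology Classical

noncomputable section

variable {E : Type*} [NormedAddCommGroup E] [InnerProductSpace ℝ E]

/-- The (possibly set-valued) nearest-point projection of `y` onto `X`. -/
def projSet (X : Set E) (y : E) : Set E := {x | x ∈ X ∧ dist y x = Metric.infDist y X}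

/-- The proximal normal cone to `X` at `x`. -/
def proxNormalCone (X : Set E) (x : E) : Set E :=
  {v | ∃ (l : ℝ) (u : E), 0 ≤ l ∧ v = l • u ∧ x ∈ projSet X (x + u)}

/-- The limiting normal cone to `X` at `x`. -/
def limNormalCone (X : Set E) (x : E) : Set E :=
  {v | ∃ xs vs : ℕ → E, (∀ n, vs n ∈ proxNormalCone X (xs n)) ∧ (∀ n, xs n ∈ X) ∧
    Tendsto xs atTop (𝓝 x) ∧ Tendsto vs atTop (𝓝 v)}

/-- The slope `|∇f|(x)`. -/
def slop {M : Type*} [MetricSpace M] (f : M → EReal) (x : M) : ℝ≥0∞ :=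
  Filter.limsup (fun w => ENNReal.ofReal ((f x - f w).toReal / dist x w)) (𝓝[≠] x)

/-- The limiting slope. -/
def limSlope {M : Type*} [MetricSpace M] (f : M → EReal) (x : M) : ℝ≥0∞ :=
  Filter.liminf (slop f) (𝓝 x ⊓ Filter.comap f (𝓝 (f x)))

/-- The proximal subdifferential. -/
def proxSubdiff (f : E → EReal) (x : E) : Set E :=
  {v | ∃ r > (0:ℝ), ∀ᶠ w in 𝓝 x,
    f x + (((inner ℝ v (w - x) : ℝ) - r * ‖w - x‖ ^ 2 : ℝ) : EReal) ≤ f w}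

/-- The limiting subdifferential. -/
def limSubdiff (f : E → EReal) (x : E) : Set E :=
  {v | ∃ xs vs : ℕ → E, (∀ n, vs n ∈ proxSubdiff f (xs n)) ∧
    Tendsto xs atTop (𝓝 x) ∧ Tendsto (fun n => f (xs n)) atTop (𝓝 (f x)) ∧
    Tendsto vs atTop (𝓝 v)}

/-- Extended-real-valued indicator function of a set. -/
def eindicator {α : Type*} (X : Set α) (w : α) : EReal := if w ∈ X then 0 else ⊤

/-- Intrinsic transversality (with proximal normal cones). -/
def IntrinsicallyTransversal (X Y : Set E) (z : E) (κ : ℝ) : Prop :=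
  ∃ Z ∈ 𝓝 z, ∀ x ∈ X ∩ Yᶜ ∩ Z, ∀ y ∈ Y ∩ Xᶜ ∩ Z,
    κ ≤ max (Metric.infDist (‖x - y‖⁻¹ • (x - y)) (proxNormalCone Y y))
            (Metric.infDist (‖x - y‖⁻¹ • (x - y)) (-(proxNormalCone X x)))

/-- Strong intrinsic transversality (with limiting normal cones). -/
def StrongIntrinsicallyTransversal (X Y : Set E) (z : E) (κ : ℝ) : Prop :=
  ∃ Z ∈ 𝓝 z, ∀ x ∈ X ∩ Yᶜ ∩ Z, ∀ y ∈ Y ∩ Xᶜ ∩ Z,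
    κ ≤ max (Metric.infDist (‖x - y‖⁻¹ • (x - y)) (limNormalCone Y y))
            (Metric.infDist (‖x - y‖⁻¹ • (x - y)) (-(limNormalCone X x)))

/-- Strict intrinsic transversality (with slopes of the coupling function marginals). -/
def StrictIntrinsicallyTransversal (X Y : Set E) (z : E) (κ : ℝ) : Prop :=
  ∃ Z ∈ 𝓝 z, ∀ x ∈ X ∩ Yᶜ ∩ Z, ∀ y ∈ Y ∩ Xᶜ ∩ Z,
    ENNReal.ofReal κ ≤ max (slop (fun w => (‖w - y‖ : EReal) + eindicator X w) x)
                           (slop (fun w => (‖x - w‖ : EReal) + eindicator Y w) y)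

/-- Super-regularity of a set at a point. -/
def SuperRegular (X : Set E) (z : E) : Prop :=
  ∀ δ > (0:ℝ), ∃ r > (0:ℝ), ∀ w ∈ X ∩ ball z r, ∀ x ∈ X ∩ ball z r, w ≠ x →
    ∀ v ∈ limNormalCone X x, v ≠ 0 →
      Real.pi / 2 - δ ≤ InnerProductGeometry.angle (w - x) v

/-- Inherent transversality (via restricted normal cones, Bauschke–Luke–Phan–Wang). -/
def InherentlyTransversal (X Y : Set E) (z : E) : Prop :=
  ∃ ε > (0:ℝ), ∃ Z ∈ 𝓝 z, ∀ x ∈ X ∩ Yᶜ ∩ Z, ∀ y ∈ Y ∩ Xᶜ ∩ Z,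
    ∀ p ∈ projSet Y x, ∀ w ∈ projSet X y,
      ε ≤ InnerProductGeometry.angle (x - p) (w - y)

/-- Semi-algebraic subsets of `ℝⁿ`: finite unions of sets defined by finitely many
polynomial equalities and strict inequalities. -/
def IsSemialgebraic {n : ℕ} (s : Set (EuclideanSpace ℝ (Fin n))) : Prop :=
  ∃ (m : ℕ) (t : Fin m → Set (EuclideanSpace ℝ (Fin n))),
    (∀ i, ∃ (k : ℕ) (p q : Fin k → MvPolynomial (Fin n) ℝ),
      t i = {x | (∀ j, MvPolynomial.eval (fun a => x a) (p j) = 0) ∧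
                 (∀ j, 0 < MvPolynomial.eval (fun a => x a) (q j))}) ∧
    s = ⋃ i, t i

end


theorem norm_normalized_sub_inner_smul_le {E : Type*} [NormedAddCommGroup E]
    [InnerProductSpace ℝ E] (p q : E) (hp : p ≠ 0) (hq : q ≠ 0) :
    ‖‖p‖⁻¹ • p - (inner ℝ (‖p‖⁻¹ • p) (‖q‖⁻¹ • q) : ℝ) • (‖q‖⁻¹ • q)‖ ≤ ‖p - q‖ / ‖q‖ := by
  have hnp : (0:ℝ) < ‖p‖ := norm_pos_iff.mpr hp
  have hnq : (0:ℝ) < ‖q‖ := norm_pos_iff.mpr hq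
  set a := ‖p‖⁻¹ • p with ha
  set b := ‖q‖⁻¹ • q with hb
  have hna : ‖a‖ = 1 := by
    rw [ha, norm_smul, norm_inv, norm_norm, inv_mul_cancel₀ hnp.ne']
  have hnb : ‖b‖ = 1 := by
    rw [hb, norm_smul, norm_inv, norm_norm, inv_mul_cancel₀ hnq.ne']
  set c : ℝ := inner ℝ a b with hc
  have hcval : c = ‖p‖⁻¹ * (‖q‖⁻¹ * inner ℝ p q) := by
    rw [hc, ha, hb, real_inner_smul_left, real_inner_smul_right]
  have hsq : ‖a - c • b‖ ^ 2 = 1 - c ^ 2 := by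
    rw [norm_sub_sq_real, real_inner_smul_right, hna, norm_smul, hnb, ← hc,
      Real.norm_eq_abs]
    simp [sq_abs]
    ring
  have hpq : ‖p - q‖ ^ 2 = ‖p‖ ^ 2 - 2 * inner ℝ p q + ‖q‖ ^ 2 := by
    rw [norm_sub_sq_real]
  have key : ‖a - c • b‖ ^ 2 ≤ (‖p - q‖ / ‖q‖) ^ 2 := by
    rw [hsq, div_pow, hcval, hpq, le_div_iff₀ (by positivity : (0:ℝ) < ‖q‖ ^ 2)]
    have hip : ‖p‖ ≠ 0 := hnp.ne'
    have hiq : ‖q‖ ≠ 0 := hnq.ne'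
    field_simp
    have := sq_nonneg (‖p‖ ^ 2 - (inner ℝ p q : ℝ))
    nlinarith [mul_nonneg (sq_nonneg ‖q‖) (sq_nonneg (‖p‖ ^ 2 - (inner ℝ p q : ℝ)))]
  exact le_of_pow_le_pow_left₀ two_ne_zero (by positivity) key
end

section
/- (Error bound via slope) Let f : E → ℝ ∪ {+∞} be lower semicontinuous and finite at x, and let δ > 0 and α < f(x) be constants such that K := inf{|∇f|(w) : α < f(w) ≤ f(x), |w - x| ≤ δ} > (f(x) - α)/δ. Then the level set [f ≤ α] = {u : f(u) ≤ α} is nonempty and d(x, [f ≤ α]) ≤ (f(x) - α)/K. -/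
open Set Metric Filter
open scoped ENNReal Topology Classical

lemma ekeland_aux {M : Type*} [MetricSpace M] [CompleteSpace M]
    (G : M → ℝ) (hlsc : LowerSemicontinuous G) (m : ℝ) (hm : ∀ w, m ≤ G w)
    (x : M) (ε : ℝ) (hε : 0 < ε) :
    ∃ y, ε * dist x y ≤ G x - G y ∧ ∀ u, G y ≤ G u + ε * dist y u := by
  set D : M → Set M := fun w => {u | G u + ε * dist w u ≤ G w} with hD
  have hself : ∀ w, w ∈ D w := by intro w; simp [hD]
  have htrans : ∀ {w u v}, u ∈ D w → v ∈ D u → v ∈ D w := by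
    intro w u v h1 h2
    simp only [hD, Set.mem_setOf_eq] at *
    have ht := dist_triangle w u v
    nlinarith [hε.le]
  have hex : ∀ (w : M) (n : ℕ), ∃ u, u ∈ D w ∧ G u < sInf (G '' D w) + (1/2:ℝ)^n := by
    intro w n
    obtain ⟨r, hr, hrlt⟩ := Real.lt_sInf_add_pos ⟨G w, Set.mem_image_of_mem G (hself w)⟩
      (pow_pos (by norm_num : (0:ℝ) < 1/2) n)
    obtain ⟨u, hu, rfl⟩ := hr
    exact ⟨u, hu, hrlt⟩
  choose F hF1 hF2 using hex
  set seq : ℕ → M := fun n => Nat.rec x (fun k w => F w k) n with hseq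
  have hstep : ∀ n, seq (n+1) ∈ D (seq n) := fun n => hF1 _ _
  have hchain : ∀ n k, n ≤ k → seq k ∈ D (seq n) := by
    intro n k hk
    induction k, hk using Nat.le_induction with
    | base => exact hself _
    | succ k hk ih => exact htrans ih (hstep k)
  have hbdd : BddBelow (Set.range fun n => G (seq n)) := ⟨m, by rintro r ⟨n, rfl⟩; exact hm _⟩
  have hanti : Antitone fun n => G (seq n) := by
    apply antitone_nat_of_succ_le
    intro n
    have := hstep n
    simp only [hD, Set.mem_setOf_eq] at this
    nlinarith [dist_nonneg (x := seq n) (y := seq (n+1)), hε.le]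
  set L : ℝ := ⨅ n, G (seq n) with hL
  have hLt : Tendsto (fun n => G (seq n)) atTop (𝓝 L) := tendsto_atTop_ciInf hanti hbdd
  have hLle : ∀ n, L ≤ G (seq n) := fun n => ciInf_le hbdd n
  have hcauchy : CauchySeq seq := by
    rw [Metric.cauchySeq_iff']
    intro η hη
    obtain ⟨N, hN⟩ := (Metric.tendsto_atTop.1 hLt) (ε * η / 2) (by positivity)
    refine ⟨N, fun n hn => ?_⟩
    have hmem := hchain N n hn
    simp only [hD, Set.mem_setOf_eq] at hmem
    have h1 : G (seq N) - L < ε * η / 2 := by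
      have := hN N le_rfl
      rw [Real.dist_eq] at this
      have := abs_lt.1 this
      linarith [this.2]
    have h2 : L ≤ G (seq n) := hLle n
    have : ε * dist (seq N) (seq n) ≤ G (seq N) - G (seq n) := by linarith
    rw [dist_comm]
    nlinarith
  obtain ⟨y, hy⟩ := cauchySeq_tendsto_of_complete hcauchy
  have hGyL : G y ≤ L := by
    by_contra h
    push_neg at h
    obtain ⟨c, hc1, hc2⟩ := exists_between h
    have hev : ∀ᶠ w in 𝓝 y, c < G w := hlsc y c hc2
    have hev2 : ∀ᶠ n in atTop, c < G (seq n) := hy.eventually hev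
    have hev3 : ∀ᶠ n in atTop, G (seq n) < c := hLt.eventually (eventually_lt_nhds hc1)
    obtain ⟨n, h1, h2⟩ := (hev2.and hev3).exists
    linarith
  have hyD : ∀ n, G y + ε * dist (seq n) y ≤ G (seq n) := by
    intro n
    have h1 : Tendsto (fun k => G (seq k) + ε * dist (seq n) (seq k)) atTop
        (𝓝 (L + ε * dist (seq n) y)) :=
      hLt.add ((tendsto_const_nhds.mul (tendsto_const_nhds.dist hy)))
    have h2 : ∀ᶠ k in atTop, G (seq k) + ε * dist (seq n) (seq k) ≤ G (seq n) := by
      filter_upwards [eventually_ge_atTop n] with k hk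
      exact hchain n k hk
    have := le_of_tendsto h1 h2
    have hd : ε * dist (seq n) y ≤ ε * dist (seq n) y := le_rfl
    linarith
  refine ⟨y, ?_, ?_⟩
  · have h0 := hyD 0
    have hx0 : seq 0 = x := rfl
    rw [hx0] at h0
    linarith
  · intro u
    by_contra hcon
    push_neg at hcon
    have huDy : u ∈ D y := le_of_lt hcon
    have huD : ∀ n, u ∈ D (seq n) := by
      intro n
      refine htrans ?_ huDy
      exact hyD n
    have hinf : ∀ n, sInf (G '' D (seq n)) ≤ G u := by
      intro n
      apply csInf_le ⟨m, by rintro r ⟨v, _, rfl⟩; exact hm v⟩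
      exact Set.mem_image_of_mem G (huD n)
    have hGy2 : ∀ n, G y ≤ G (seq (n+1)) := by
      intro n
      have := hyD (n+1)
      nlinarith [dist_nonneg (x := seq (n+1)) (y := y), hε.le]
    have hkey : ∀ n : ℕ, G y ≤ G u + (1/2:ℝ)^n := by
      intro n
      have := hF2 (seq n) n
      have h2 := hinf n
      have h3 := hGy2 n
      linarith
    have hle : G y ≤ G u := by
      refine le_of_forall_pos_le_add fun η hη => ?_
      obtain ⟨n, hn⟩ := exists_pow_lt_of_lt_one hη (by norm_num : (1/2:ℝ) < 1)
      linarith [hkey n]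
    nlinarith [dist_nonneg (x := y) (y := u), hε.le]


theorem error_bound_via_slope {M : Type*} [MetricSpace M] [CompleteSpace M]
    (f : M → EReal) (hlsc : LowerSemicontinuous f) (hbot : ∀ w, f w ≠ ⊥)
    (x : M) (a : ℝ) (hfx : f x = (a : EReal)) (δ : ℝ) (hδ : 0 < δ) (α : ℝ) (hα : α < a)
    (hK : ENNReal.ofReal ((a - α) / δ) <
      ⨅ w ∈ {w : M | (α : EReal) < f w ∧ f w ≤ f x ∧ dist w x ≤ δ}, slop f w) :
    {u : M | f u ≤ (α : EReal)}.Nonempty ∧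
      EMetric.infEdist x {u : M | f u ≤ (α : EReal)} ≤
        ENNReal.ofReal (a - α) /
          ⨅ w ∈ {w : M | (α : EReal) < f w ∧ f w ≤ f x ∧ dist w x ≤ δ}, slop f w := by
  set S : Set M := {w : M | (α : EReal) < f w ∧ f w ≤ f x ∧ dist w x ≤ δ} with hS
  set K : ℝ≥0∞ := ⨅ w ∈ S, slop f w with hKdef
  have haα : (0:ℝ) < a - α := by linarith
  have hαa : ((α:ℝ):EReal) < ((a:ℝ):EReal) := by exact_mod_cast hα
  -- the truncated function
  set Z : M → EReal := fun w => min (max (f w) ((α:ℝ):EReal)) ((a:ℝ):EReal) with hZdef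
  have hZ1 : ∀ w, ((α:ℝ):EReal) ≤ Z w := fun w => le_min (le_max_right _ _) hαa.le
  have hZ2 : ∀ w, Z w ≤ ((a:ℝ):EReal) := fun w => min_le_right _ _
  have hZtop : ∀ w, Z w ≠ ⊤ := fun w => ne_top_of_le_ne_top (EReal.coe_ne_top a) (hZ2 w)
  have hZbot : ∀ w, Z w ≠ ⊥ := fun w =>
    ne_bot_of_le_ne_bot (EReal.coe_ne_bot α) (hZ1 w)
  set G : M → ℝ := fun w => (Z w).toReal with hGdef
  have hcoe : ∀ w, ((G w : ℝ) : EReal) = Z w := fun w => EReal.coe_toReal (hZtop w) (hZbot w)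
  have hGα : ∀ w, α ≤ G w := by
    intro w
    have := hZ1 w
    rw [← hcoe w] at this
    exact_mod_cast this
  have hGa : ∀ w, G w ≤ a := by
    intro w
    have := hZ2 w
    rw [← hcoe w] at this
    exact_mod_cast this
  have hGx : G x = a := by
    have hZx : Z x = ((a:ℝ):EReal) := by
      simp only [hZdef, hfx]
      rw [max_eq_left hαa.le, min_self]
    rw [hGdef]
    simp [hZx]
  have hGlsc : LowerSemicontinuous G := by
    intro w₀ y hy
    rcases lt_or_ge y α with h | h
    · exact Filter.Eventually.of_forall fun w => lt_of_lt_of_le h (hGα w)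
    · have hya : y < a := lt_of_lt_of_le hy (hGa w₀)
      have hyf : ((y:ℝ):EReal) < f w₀ := by
        have h1 : ((y:ℝ):EReal) < Z w₀ := by
          rw [← hcoe w₀]; exact_mod_cast hy
        have h2 : ((y:ℝ):EReal) < max (f w₀) ((α:ℝ):EReal) :=
          lt_of_lt_of_le h1 (min_le_left _ _)
        rcases lt_max_iff.1 h2 with h3 | h3
        · exact h3
        · exact absurd h3 (not_lt.2 (by exact_mod_cast h))
      filter_upwards [hlsc w₀ ((y:ℝ):EReal) hyf] with w hw
      have h1 : ((y:ℝ):EReal) < Z w := by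
        rw [hZdef]
        refine lt_min (lt_of_lt_of_le hw (le_max_left _ _)) ?_
        exact_mod_cast hya
      rw [← hcoe w] at h1
      exact_mod_cast h1
  -- main claim
  have claim : ∀ ε : ℝ, (a - α) / δ < ε → ENNReal.ofReal ε < K →
      ∃ y, f y ≤ ((α:ℝ):EReal) ∧ dist x y ≤ (a - α) / ε := by
    intro ε hε1 hε2
    have hεpos : 0 < ε := lt_of_le_of_lt (by positivity) hε1
    obtain ⟨y, hy1, hy2⟩ := ekeland_aux G hGlsc α hGα x ε hεpos
    rw [hGx] at hy1
    have hdxy : dist x y ≤ (a - α) / ε := by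
      rw [le_div_iff₀ hεpos]
      have := hGα y
      nlinarith
    by_cases hfy : f y ≤ ((α:ℝ):EReal)
    · exact ⟨y, hfy, hdxy⟩
    exfalso
    push_neg at hfy
    have hfya : f y ≤ ((a:ℝ):EReal) := by
      by_contra hcon
      push_neg at hcon
      have hZy : Z y = ((a:ℝ):EReal) := by
        simp only [hZdef]
        rw [max_eq_left (le_trans hαa.le hcon.le), min_eq_right hcon.le]
      have hGy : G y = a := by rw [hGdef]; simp [hZy]
      rw [hGy] at hy1
      have hd0 : dist x y = 0 := le_antisymm (by nlinarith [dist_nonneg (x := x) (y := y)]) dist_nonneg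
      have hxy : x = y := by rwa [dist_eq_zero] at hd0
      rw [← hxy, hfx] at hcon
      exact lt_irrefl _ hcon
    have hZy : Z y = f y := by
      simp only [hZdef]
      rw [max_eq_left hfy.le, min_eq_left hfya]
    have hfyG : f y = ((G y : ℝ) : EReal) := by rw [hcoe y, hZy]
    have hyS : y ∈ S := by
      refine ⟨hfy, by rw [hfx]; exact hfya, ?_⟩
      rw [dist_comm]
      refine le_trans hdxy ?_
      rw [div_le_iff₀ hεpos]
      rw [div_lt_iff₀ hδ] at hε1
      nlinarith
    have hKy : K ≤ slop f y := iInf₂_le y hyS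
    have hsl : slop f y ≤ ENNReal.ofReal ε := by
      have hev : ∀ᶠ u in 𝓝[≠] y,
          ENNReal.ofReal ((f y - f u).toReal / dist y u) ≤ ENNReal.ofReal ε := by
        have h1 : ∀ᶠ u in 𝓝 y, ((α:ℝ):EReal) < f u := hlsc y _ hfy
        filter_upwards [nhdsWithin_le_nhds h1, self_mem_nhdsWithin] with u hu hune
        apply ENNReal.ofReal_le_ofReal
        have hd : 0 < dist y u := dist_pos.2 fun h => hune h.symm
        rcases eq_or_ne (f u) ⊤ with h | h
        · rw [hfyG, h]
          have : ((G y : ℝ) : EReal) - ⊤ = ⊥ := by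
            rw [sub_eq_add_neg, EReal.neg_top, EReal.add_bot]
          rw [this, EReal.toReal_bot, zero_div]
          exact hεpos.le
        · have hfu : f u = (((f u).toReal : ℝ) : EReal) := (EReal.coe_toReal h (hbot u)).symm
          set r : ℝ := (f u).toReal with hr
          have hGu : G u ≤ r := by
            have hZu : Z u ≤ f u := by
              simp only [hZdef]
              rw [max_eq_left hu.le]
              exact min_le_left _ _
            rw [← hcoe u, hfu] at hZu
            exact_mod_cast hZu
          have key := hy2 u
          rw [hfyG, hfu, ← EReal.coe_sub, EReal.toReal_coe]
          rw [div_le_iff₀ hd]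
          linarith
      exact limsup_le_of_le (by isBoundedDefault) hev
    exact absurd (lt_of_lt_of_le hε2 (le_trans hKy hsl)) (lt_irrefl _)
  constructor
  · obtain ⟨c, hc1, hc2⟩ := exists_between hK
    have hcne : c ≠ ⊤ := hc2.ne_top
    set ε : ℝ := c.toReal with hε
    have hεc : ENNReal.ofReal ε = c := ENNReal.ofReal_toReal hcne
    have hε1 : (a - α) / δ < ε := by
      rw [← hεc] at hc1
      exact (ENNReal.ofReal_lt_ofReal_iff_of_nonneg (by positivity)).1 hc1
    obtain ⟨y, hy1, _⟩ := claim ε hε1 (by rw [hεc]; exact hc2)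
    exact ⟨y, hy1⟩
  · rw [ENNReal.le_div_iff_mul_le (Or.inr (ENNReal.ofReal_pos.2 haα).ne')
      (Or.inr ENNReal.ofReal_ne_top)]
    have hKs : K = sSup (Set.Ioo (ENNReal.ofReal ((a - α) / δ)) K) := (csSup_Ioo hK).symm
    calc EMetric.infEdist x {u : M | f u ≤ ((α:ℝ):EReal)} * K
        = ⨆ c ∈ Set.Ioo (ENNReal.ofReal ((a - α) / δ)) K,
            EMetric.infEdist x {u : M | f u ≤ ((α:ℝ):EReal)} * c := by
          conv_lhs => rw [hKs]
          exact ENNReal.mul_sSup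
      _ ≤ ENNReal.ofReal (a - α) := by
          refine iSup₂_le fun c hc => ?_
          have hcne : c ≠ ⊤ := hc.2.ne_top
          set ε : ℝ := c.toReal with hε
          have hεc : ENNReal.ofReal ε = c := ENNReal.ofReal_toReal hcne
          have hε1 : (a - α) / δ < ε := by
            have := hc.1
            rw [← hεc] at this
            exact (ENNReal.ofReal_lt_ofReal_iff_of_nonneg (by positivity)).1 this
          have hεpos : 0 < ε := lt_of_le_of_lt (by positivity) hε1
          obtain ⟨y, hy1, hy2⟩ := claim ε hε1 (by rw [hεc]; exact hc.2)
          have h1 : EMetric.infEdist x {u : M | f u ≤ ((α:ℝ):EReal)} ≤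
              ENNReal.ofReal ((a - α) / ε) := by
            refine le_trans (EMetric.infEdist_le_edist_of_mem hy1) ?_
            rw [edist_dist]
            exact ENNReal.ofReal_le_ofReal hy2
          calc EMetric.infEdist x {u : M | f u ≤ ((α:ℝ):EReal)} * c
              ≤ ENNReal.ofReal ((a - α) / ε) * ENNReal.ofReal ε := by
                rw [hεc]; exact mul_le_mul_left h1 c
            _ = ENNReal.ofReal ((a - α) / ε * ε) := (ENNReal.ofReal_mul (by positivity)).symm
            _ = ENNReal.ofReal (a - α) := by rw [div_mul_cancel₀ _ hεpos.ne']
end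

section
/- (Distance decrease) Let X ⊂ E be closed, x ∈ X, y ∉ X, and ρ = |y - x|. Given δ > 0, suppose μ := inf{ d( (y-w)/|y-w| , N_X(w) ) : w ∈ X, |w - y| ≤ ρ, |w - x| ≤ δ } > 0. Then d(y, X) ≤ |y - x| - μδ. -/
open Set Metric Filter
open scoped ENNReal Topology Classical

lemma aux_norm_mul_le {E : Type*} [NormedAddCommGroup E] [InnerProductSpace ℝ E]
    (b c : E) : ‖b‖ * ‖b - c‖ ≤ (inner ℝ b (b - c) : ℝ) + ‖c‖ ^ 2 / 2 := by
  have h1 : ‖c‖ ^ 2 = ‖b‖ ^ 2 - 2 * (inner ℝ b (b - c) : ℝ) + ‖b - c‖ ^ 2 := by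
    have h := norm_sub_sq_real b (b - c)
    simpa using h
  nlinarith [sq_nonneg (‖b‖ - ‖b - c‖)]

set_option maxHeartbeats 2000000 in
theorem distance_decrease {E : Type*} [NormedAddCommGroup E] [InnerProductSpace ℝ E]
    [FiniteDimensional ℝ E] (X : Set E) (hX : IsClosed X) (x y : E) (hx : x ∈ X) (hy : y ∉ X)
    (δ : ℝ) (hδ : 0 < δ) (μ : ℝ) (hμ : 0 < μ)
    (hbound : ∀ w ∈ X, dist w y ≤ dist y x → dist w x ≤ δ →
      μ ≤ Metric.infDist (‖y - w‖⁻¹ • (y - w)) (limNormalCone X w)) :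
    Metric.infDist y X ≤ dist y x - μ * δ := by
  classical
  by_contra hcon
  push_neg at hcon
  have hXne : X.Nonempty := ⟨x, hx⟩
  set d0 := Metric.infDist y X with hd0
  have hd0pos : 0 < d0 := (hX.notMem_iff_infDist_pos hXne).mp hy
  set ρ := dist y x with hρ
  have hρpos : 0 < ρ := dist_pos.2 (fun h => hy (h ▸ hx))
  have hd0ρ : d0 ≤ ρ := Metric.infDist_le_dist_of_mem hx
  have hgap : ρ - d0 < μ * δ := by linarith
  set a := max ((ρ - d0) / δ) 0 with ha
  have haμ : a < μ := max_lt ((div_lt_iff₀ hδ).2 (by linarith)) hμ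
  have ha0 : 0 ≤ a := le_max_right _ _
  set μ' := (a + μ) / 2 with hμ'
  have hμ'pos : 0 < μ' := by rw [hμ']; linarith
  have hμ'lt : μ' < μ := by rw [hμ']; linarith
  have hgap' : ρ - d0 < μ' * δ := by
    have h1 : (ρ - d0) / δ ≤ a := le_max_left _ _
    have h2 : (ρ - d0) / δ < μ' := by rw [hμ']; linarith
    have h3 := (div_lt_iff₀ hδ).1 h2
    linarith
  set R := ρ / μ' with hRdef
  have hRpos : 0 < R := div_pos hρpos hμ'pos
  have hμ'R : μ' * R = ρ := by rw [hRdef]; field_simp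
  -- the compact constraint set
  set A := X ∩ Metric.closedBall x R with hA
  set K : Set (E × E × E) :=
    A ×ˢ (Metric.closedBall x (R + 1)) ×ˢ (Metric.closedBall x (R + 1)) with hK
  have hKc : IsCompact K :=
    ((isCompact_closedBall x R).inter_left hX).prod
      ((isCompact_closedBall x (R + 1)).prod (isCompact_closedBall x (R + 1)))
  have hxA : x ∈ A := ⟨hx, Metric.mem_closedBall_self hRpos.le⟩
  have hxB : x ∈ Metric.closedBall x (R + 1) := Metric.mem_closedBall_self (by linarith)
  have hKne : K.Nonempty := ⟨(x, x, x), ⟨hxA, hxB, hxB⟩⟩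
  set cF : ℕ → ℝ := fun n => (n : ℝ) + 1 with hcF
  have hcFpos : ∀ n, 0 < cF n := fun n => by positivity
  set F : ℕ → E × E × E → ℝ := fun n w =>
    ‖y - w.2.1‖ + μ' * ‖w.2.2 - x‖ + cF n * (‖w.1 - w.2.1‖ ^ 2 + ‖w.1 - w.2.2‖ ^ 2) with hF
  have hFcont : ∀ n, ContinuousOn (F n) K := fun n => Continuous.continuousOn (by fun_prop)
  have hminex : ∀ n, ∃ w ∈ K, IsMinOn (F n) K w := fun n => hKc.exists_isMinOn hKne (hFcont n)
  choose m hmK hmm using hminex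
  have hmA : ∀ n, (m n).1 ∈ A := fun n => (hmK n).1
  have hmzX : ∀ n, (m n).1 ∈ X := fun n => (hmA n).1
  have hmzR : ∀ n, ‖(m n).1 - x‖ ≤ R := fun n => by
    have := (hmA n).2; rwa [Metric.mem_closedBall, dist_eq_norm] at this
  have hmpB : ∀ n, ‖(m n).2.1 - x‖ ≤ R + 1 := fun n => by
    have := (hmK n).2.1; rwa [Metric.mem_closedBall, dist_eq_norm] at this
  have hmqB : ∀ n, ‖(m n).2.2 - x‖ ≤ R + 1 := fun n => by
    have := (hmK n).2.2; rwa [Metric.mem_closedBall, dist_eq_norm] at this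
  have hFρ : ∀ n, F n (m n) ≤ ρ := by
    intro n
    have h1 := isMinOn_iff.mp (hmm n) (x, x, x) ⟨hxA, hxB, hxB⟩
    have h2 : F n (x, x, x) = ρ := by simp [hF, hρ, dist_eq_norm]
    linarith
  have hterm : ∀ n, ‖(m n).1 - (m n).2.1‖ ^ 2 ≤ ρ / cF n ∧
      ‖(m n).1 - (m n).2.2‖ ^ 2 ≤ ρ / cF n ∧
      ‖y - (m n).2.1‖ + μ' * ‖(m n).2.2 - x‖ ≤ ρ := by
    intro n
    have h := hFρ n
    simp only [hF] at h
    have hc := hcFpos n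
    have h1 : (0:ℝ) ≤ ‖y - (m n).2.1‖ := norm_nonneg _
    have h2 : (0:ℝ) ≤ μ' * ‖(m n).2.2 - x‖ := by positivity
    have h3 : (0:ℝ) ≤ ‖(m n).1 - (m n).2.1‖ ^ 2 := sq_nonneg _
    have h4 : (0:ℝ) ≤ ‖(m n).1 - (m n).2.2‖ ^ 2 := sq_nonneg _
    have h5 : (0:ℝ) ≤ cF n * ‖(m n).1 - (m n).2.1‖ ^ 2 := by positivity
    have h6 : (0:ℝ) ≤ cF n * ‖(m n).1 - (m n).2.2‖ ^ 2 := by positivity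
    refine ⟨(le_div_iff₀ hc).2 ?_, (le_div_iff₀ hc).2 ?_, ?_⟩ <;> nlinarith
  -- bound on the q-multiplier
  set G : ℕ → E := fun n => (2 * cF n) • ((m n).1 - (m n).2.2) with hGdef
  have hGle : ∀ n, ‖G n‖ ≤ μ' := by
    intro n
    set z := (m n).1 with hz
    set p := (m n).2.1 with hp
    set q := (m n).2.2 with hq
    set c := cF n with hc
    have hcpos : 0 < c := hcFpos n
    set d := ‖z - q‖ with hd
    have hGn : ‖G n‖ = 2 * c * d := by
      rw [hGdef, norm_smul, Real.norm_eq_abs, abs_of_pos (by positivity), hd]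
    rcases eq_or_ne z q with hzq | hzq
    · rw [hGn, hd, hzq, sub_self, norm_zero]; simpa using hμ'pos.le
    have hdpos : 0 < d := by rw [hd]; exact norm_pos_iff.2 (sub_ne_zero.2 hzq)
    have key : ∀ t : ℝ, 0 < t → t ≤ 1 → c * (2 - t) * d ≤ μ' := by
      intro t ht ht1
      set qt := q + t • (z - q) with hqt
      have hqtB : qt ∈ Metric.closedBall x (R + 1) := by
        have hrw : qt - x = (1 - t) • (q - x) + t • (z - x) := by rw [hqt]; module
        rw [Metric.mem_closedBall, dist_eq_norm, hrw]
        have hb1 : ‖q - x‖ ≤ R + 1 := hmqB n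
        have hb2 : ‖z - x‖ ≤ R + 1 := (hmzR n).trans (by linarith)
        calc ‖(1 - t) • (q - x) + t • (z - x)‖
            ≤ ‖(1 - t) • (q - x)‖ + ‖t • (z - x)‖ := norm_add_le _ _
          _ = (1 - t) * ‖q - x‖ + t * ‖z - x‖ := by
              rw [norm_smul, norm_smul, Real.norm_eq_abs, Real.norm_eq_abs,
                abs_of_nonneg (by linarith), abs_of_nonneg ht.le]
          _ ≤ (1 - t) * (R + 1) + t * (R + 1) := by
              have h1 : 0 ≤ 1 - t := by linarith
              have := mul_le_mul_of_nonneg_left hb1 h1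
              have := mul_le_mul_of_nonneg_left hb2 ht.le
              linarith
          _ = R + 1 := by ring
      have hmem : ((m n).1, (m n).2.1, qt) ∈ K := ⟨hmA n, (hmK n).2.1, hqtB⟩
      have hle := isMinOn_iff.mp (hmm n) _ hmem
      simp only [hF] at hle
      rw [← hz, ← hp, ← hq] at hle
      have e1 : ‖z - qt‖ = (1 - t) * d := by
        have hrw : z - qt = (1 - t) • (z - q) := by rw [hqt]; module
        rw [hrw, norm_smul, Real.norm_eq_abs, abs_of_nonneg (by linarith), hd]
      have e2 : μ' * ‖qt - x‖ ≤ μ' * (‖q - x‖ + t * d) := by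
        have hrw : qt - x = (q - x) + t • (z - q) := by rw [hqt]; module
        refine mul_le_mul_of_nonneg_left ?_ hμ'pos.le
        rw [hrw]
        refine (norm_add_le _ _).trans ?_
        rw [norm_smul, Real.norm_eq_abs, abs_of_nonneg ht.le, hd]
      rw [e1] at hle
      have h5 : c * d ^ 2 * (t * (2 - t)) ≤ μ' * (t * d) := by nlinarith
      have h6 : 0 < t * d := by positivity
      nlinarith [mul_pos ht hdpos, h5]
    rw [hGn]
    refine le_of_forall_pos_le_add fun ε hε => ?_
    set t := min 1 (ε / (c * d)) with htdef
    have ht : 0 < t := lt_min one_pos (div_pos hε (by positivity))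
    have ht1 : t ≤ 1 := min_le_left _ _
    have h7 := key t ht ht1
    have h8 : c * d * t ≤ ε := by
      have h9 : t ≤ ε / (c * d) := min_le_right _ _
      have h10 : (0:ℝ) < c * d := by positivity
      calc c * d * t ≤ c * d * (ε / (c * d)) := mul_le_mul_of_nonneg_left h9 h10.le
        _ = ε := by field_simp
    nlinarith
  -- extract convergent subsequence
  obtain ⟨⟨⟨zb, pb, qb⟩, Gb⟩, hL, φ, hφmono, hφtend⟩ :=
    (hKc.prod (isCompact_closedBall (0:E) μ')).tendsto_subseq
      (x := fun n => ((m n), G n))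
      (fun n => ⟨hmK n, mem_closedBall_zero_iff.mpr (hGle n)⟩)
  have hmt : Tendsto (fun k => m (φ k)) atTop (𝓝 (zb, pb, qb)) :=
    (continuous_fst.tendsto _).comp hφtend
  have hzt : Tendsto (fun k => (m (φ k)).1) atTop (𝓝 zb) :=
    (continuous_fst.tendsto _).comp hmt
  have hpt : Tendsto (fun k => (m (φ k)).2.1) atTop (𝓝 pb) :=
    ((continuous_fst.comp continuous_snd).tendsto _).comp hmt
  have hqt : Tendsto (fun k => (m (φ k)).2.2) atTop (𝓝 qb) :=
    ((continuous_snd.comp continuous_snd).tendsto _).comp hmt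
  have hGt : Tendsto (fun k => G (φ k)) atTop (𝓝 Gb) :=
    (continuous_snd.tendsto _).comp hφtend
  have hGb : ‖Gb‖ ≤ μ' := mem_closedBall_zero_iff.mp hL.2
  -- squeeze: ‖z - p‖, ‖z - q‖ → 0
  have hsqrt0 : Tendsto (fun k : ℕ => Real.sqrt (ρ / ((k:ℝ) + 1))) atTop (𝓝 0) := by
    have h1 : Tendsto (fun k : ℕ => ρ / ((k:ℝ) + 1)) atTop (𝓝 0) := by
      have h2 := (tendsto_const_div_atTop_nhds_zero_nat ρ).comp (tendsto_add_atTop_nat 1)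
      simp only [Function.comp_def] at h2
      convert h2 using 2 with k
      push_cast
      ring
    have h2 := (Real.continuous_sqrt.tendsto 0).comp h1
    simpa [Function.comp_def] using h2
  have hbnd : ∀ sel : E × E × E → E, (∀ n, ‖(m n).1 - sel (m n)‖ ^ 2 ≤ ρ / cF n) →
      Tendsto (fun k => (m (φ k)).1 - sel (m (φ k))) atTop (𝓝 0) := by
    intro sel hsel
    rw [tendsto_zero_iff_norm_tendsto_zero]
    refine squeeze_zero (fun k => norm_nonneg _) (fun k => ?_) hsqrt0
    have h2 : ((k:ℝ) + 1) ≤ cF (φ k) := by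
      have h3 : k ≤ φ k := hφmono.le_apply
      simp only [hcF]
      have : (k:ℝ) ≤ (φ k : ℝ) := Nat.cast_le.2 h3
      linarith
    have h1 : ‖(m (φ k)).1 - sel (m (φ k))‖ ^ 2 ≤ ρ / ((k:ℝ) + 1) :=
      (hsel (φ k)).trans (div_le_div_of_nonneg_left hρpos.le (by positivity) h2)
    rw [show ρ / ((k:ℝ)+1) = Real.sqrt (ρ / ((k:ℝ)+1)) ^ 2 from
      (Real.sq_sqrt (by positivity)).symm] at h1
    have h3 : (0:ℝ) ≤ Real.sqrt (ρ / ((k:ℝ)+1)) := Real.sqrt_nonneg _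
    nlinarith [norm_nonneg ((m (φ k)).1 - sel (m (φ k)))]
  have hzp0 : Tendsto (fun k => (m (φ k)).1 - (m (φ k)).2.1) atTop (𝓝 0) :=
    hbnd (fun w => w.2.1) (fun n => (hterm n).1)
  have hzq0 : Tendsto (fun k => (m (φ k)).1 - (m (φ k)).2.2) atTop (𝓝 0) :=
    hbnd (fun w => w.2.2) (fun n => (hterm n).2.1)
  have hpbzb : pb = zb := by
    have h1 := tendsto_nhds_unique (hzt.sub hpt) hzp0
    have h2 := sub_eq_zero.mp h1
    exact h2.symm
  have hqbzb : qb = zb := by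
    have h1 := tendsto_nhds_unique (hzt.sub hqt) hzq0
    exact (sub_eq_zero.mp h1).symm
  rw [hpbzb] at hpt
  rw [hqbzb] at hqt
  -- limit point facts
  have hzbX : zb ∈ X := hX.mem_of_tendsto hzt (Filter.Eventually.of_forall fun k => hmzX (φ k))
  have hval : ‖y - zb‖ + μ' * ‖zb - x‖ ≤ ρ := by
    have h1 : Tendsto (fun k => ‖y - (m (φ k)).2.1‖ + μ' * ‖(m (φ k)).2.2 - x‖) atTop
        (𝓝 (‖y - zb‖ + μ' * ‖zb - x‖)) :=
      ((tendsto_const_nhds.sub hpt).norm).add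
        (tendsto_const_nhds.mul ((hqt.sub tendsto_const_nhds).norm))
    exact le_of_tendsto h1 (Filter.Eventually.of_forall fun k => (hterm (φ k)).2.2)
  have hd0zb : d0 ≤ ‖y - zb‖ := by
    rw [← dist_eq_norm]; exact Metric.infDist_le_dist_of_mem hzbX
  have hzbδ : ‖zb - x‖ < δ := by
    have h1 : μ' * ‖zb - x‖ < μ' * δ := by linarith
    exact lt_of_mul_lt_mul_left h1 hμ'pos.le
  have hzbR : ‖zb - x‖ < R := by
    have h1 : μ' * ‖zb - x‖ < μ' * R := by rw [hμ'R]; linarith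
    exact lt_of_mul_lt_mul_left h1 hμ'pos.le
  have hyzb : 0 < ‖y - zb‖ := lt_of_lt_of_le hd0pos hd0zb
  set s0 := (R - ‖zb - x‖) / 3 with hs0
  have hs0pos : 0 < s0 := by rw [hs0]; linarith
  set C : ℕ → E := fun n => (2:ℝ)⁻¹ • ((m n).2.1 + (m n).2.2) with hC
  have hCt : Tendsto (fun k => C (φ k)) atTop (𝓝 zb) := by
    have h1 : Tendsto (fun k => (2:ℝ)⁻¹ • ((m (φ k)).2.1 + (m (φ k)).2.2)) atTop
        (𝓝 ((2:ℝ)⁻¹ • (zb + zb))) := (hpt.add hqt).const_smul _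
    rw [show (2:ℝ)⁻¹ • (zb + zb) = zb by module] at h1
    exact h1
  -- eventual properties along the subsequence
  have ev1 : ∀ᶠ k in atTop, ‖(m (φ k)).2.1 - x‖ < R + 1 :=
    ((hpt.sub tendsto_const_nhds).norm).eventually_lt_const (by linarith)
  have ev2 : ∀ᶠ k in atTop, 0 < ‖y - (m (φ k)).2.1‖ :=
    ((tendsto_const_nhds.sub hpt).norm).eventually_const_lt hyzb
  have ev3 : ∀ᶠ k in atTop, ‖C (φ k) - x‖ < R - 2 * s0 :=
    ((hCt.sub tendsto_const_nhds).norm).eventually_lt_const (by rw [hs0]; linarith)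
  have ev4 : ∀ᶠ k in atTop, ‖(m (φ k)).1 - C (φ k)‖ < s0 :=
    ((hzt.sub hCt).norm).eventually_lt_const (by simpa using hs0pos)
  obtain ⟨N₀, hN₀⟩ := eventually_atTop.mp (ev1.and (ev2.and (ev3.and ev4)))
  -- sequences witnessing membership in the limiting normal cone
  set xs : ℕ → E := fun k => (m (φ (k + N₀))).1 with hxs
  set us : ℕ → E := fun k =>
    ‖y - (m (φ (k + N₀))).2.1‖⁻¹ • (y - (m (φ (k + N₀))).2.1) with hus
  set vs : ℕ → E := fun k => us k - G (φ (k + N₀)) with hvs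
  have hxst : Tendsto xs atTop (𝓝 zb) := hzt.comp (tendsto_add_atTop_nat N₀)
  have hust : Tendsto us atTop (𝓝 (‖y - zb‖⁻¹ • (y - zb))) := by
    have h1 : Tendsto (fun k => y - (m (φ (k + N₀))).2.1) atTop (𝓝 (y - zb)) :=
      (tendsto_const_nhds.sub hpt).comp (tendsto_add_atTop_nat N₀)
    exact (h1.norm.inv₀ hyzb.ne').smul h1
  have hvst : Tendsto vs atTop (𝓝 (‖y - zb‖⁻¹ • (y - zb) - Gb)) :=
    hust.sub (hGt.comp (tendsto_add_atTop_nat N₀))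
  have hprox : ∀ k, vs k ∈ proxNormalCone X (xs k) := by
    intro k
    obtain ⟨h1, h2, h3, h4⟩ := hN₀ (k + N₀) (Nat.le_add_left _ _)
    set n := φ (k + N₀) with hn
    set z := (m n).1 with hz
    set p := (m n).2.1 with hp
    set q := (m n).2.2 with hq
    set c := cF n with hcdef
    have hcpos : 0 < c := hcFpos n
    have hvsk : vs k = ‖y - p‖⁻¹ • (y - p) - G n := rfl
    have hxsk : xs k = z := rfl
    have hGn : G n = (2 * c) • (z - q) := rfl
    have hCn : C n = (2:ℝ)⁻¹ • (p + q) := rfl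
    have hmmn := hmm n
    have hmAn := hmA n
    have hmKn := hmK n
    have hmzXn : z ∈ X := hmzX n
    clear_value c q p z n
    have hB : 0 < ‖y - p‖ := h2
    -- Step 1 : the p-equation
    have hkey : ∀ h : E,
        (inner ℝ (y - p) h : ℝ) + 2 * c * ‖y - p‖ * (inner ℝ (z - p) h : ℝ) ≤ 0 := by
      intro h
      set t0 := (R + 1 - ‖p - x‖) / (‖h‖ + 1) with ht0
      have ht0pos : 0 < t0 := by
        rw [ht0]; exact div_pos (by linarith) (by positivity)
      have hstep : ∀ t : ℝ, 0 < t → t ≤ t0 →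
          (inner ℝ (y - p) h : ℝ) + 2 * c * ‖y - p‖ * (inner ℝ (z - p) h : ℝ) ≤
            t * (‖h‖ ^ 2 / 2 + c * ‖y - p‖ * ‖h‖ ^ 2) := by
        intro t ht htle
        have hptB : p + t • h ∈ Metric.closedBall x (R + 1) := by
          rw [Metric.mem_closedBall, dist_eq_norm]
          have hrw : p + t • h - x = (p - x) + t • h := by abel
          rw [hrw]
          have h5 : ‖t • h‖ ≤ t * (‖h‖ + 1) := by
            rw [norm_smul, Real.norm_eq_abs, abs_of_nonneg ht.le]; nlinarith
          have h6 : t * (‖h‖ + 1) ≤ R + 1 - ‖p - x‖ := by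
            have h7 := mul_le_mul_of_nonneg_right htle
              (by positivity : (0:ℝ) ≤ ‖h‖ + 1)
            rw [ht0] at h7
            calc t * (‖h‖ + 1) ≤ (R + 1 - ‖p - x‖) / (‖h‖ + 1) * (‖h‖ + 1) := h7
              _ = R + 1 - ‖p - x‖ := by field_simp
          calc ‖(p - x) + t • h‖ ≤ ‖p - x‖ + ‖t • h‖ := norm_add_le _ _
            _ ≤ R + 1 := by linarith
        have hmem : ((m n).1, p + t • h, (m n).2.2) ∈ K := ⟨hmA n, hptB, (hmK n).2.2⟩
        have hle := isMinOn_iff.mp (hmm n) _ hmem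
        simp only [hF] at hle
        rw [← hz, ← hp, ← hq, ← hcdef] at hle
        have hsm : ‖t • h‖ ^ 2 = t ^ 2 * ‖h‖ ^ 2 := by
          rw [norm_smul, Real.norm_eq_abs, mul_pow, sq_abs]
        have e1 : ‖y - p‖ * ‖y - (p + t • h)‖ ≤
            ‖y - p‖ ^ 2 - t * (inner ℝ (y - p) h : ℝ) + t ^ 2 * ‖h‖ ^ 2 / 2 := by
          have h5 := aux_norm_mul_le (y - p) (t • h)
          have hrw : y - (p + t • h) = (y - p) - t • h := by abel
          have h6 : (inner ℝ (y - p) ((y - p) - t • h) : ℝ)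
              = ‖y - p‖ ^ 2 - t * (inner ℝ (y - p) h : ℝ) := by
            rw [inner_sub_right, real_inner_smul_right, real_inner_self_eq_norm_sq]
          rw [h6, hsm] at h5
          rw [hrw]
          linarith
        have e2 : ‖z - (p + t • h)‖ ^ 2
            = ‖z - p‖ ^ 2 - 2 * t * (inner ℝ (z - p) h : ℝ) + t ^ 2 * ‖h‖ ^ 2 := by
          have hrw : z - (p + t • h) = (z - p) - t • h := by abel
          rw [hrw, norm_sub_sq_real, real_inner_smul_right, hsm]
          ring
        have h8 : ‖y - p‖ + c * ‖z - p‖ ^ 2 ≤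
            ‖y - (p + t • h)‖ + c * ‖z - (p + t • h)‖ ^ 2 := by linarith
        have h8b := mul_le_mul_of_nonneg_left h8 hB.le
        have he2b : c * ‖z - (p + t • h)‖ ^ 2 * ‖y - p‖
            = c * (‖z - p‖ ^ 2 - 2 * t * (inner ℝ (z - p) h : ℝ) + t ^ 2 * ‖h‖ ^ 2) * ‖y - p‖ := by
          rw [e2]
        have hfin : t * ((inner ℝ (y - p) h : ℝ) + 2 * c * ‖y - p‖ * (inner ℝ (z - p) h : ℝ)) ≤
            t ^ 2 * (‖h‖ ^ 2 / 2 + c * ‖y - p‖ * ‖h‖ ^ 2) := by linarith [h8b, e1, he2b]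
        have h9 : t * ((inner ℝ (y - p) h : ℝ) + 2 * c * ‖y - p‖ * (inner ℝ (z - p) h : ℝ)) ≤
            t * (t * (‖h‖ ^ 2 / 2 + c * ‖y - p‖ * ‖h‖ ^ 2)) := by linarith [hfin]
        exact le_of_mul_le_mul_left h9 ht
      refine le_of_forall_pos_le_add fun ε hε => ?_
      set Cd := ‖h‖ ^ 2 / 2 + c * ‖y - p‖ * ‖h‖ ^ 2 + 1 with hCd
      have hCdpos : 0 < Cd := by positivity
      set t := min t0 (ε / Cd) with htdef
      have ht : 0 < t := lt_min ht0pos (div_pos hε hCdpos)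
      have h10 := hstep t ht (min_le_left _ _)
      have h11 : t * Cd ≤ ε := by
        have h12 : t ≤ ε / Cd := min_le_right _ _
        calc t * Cd ≤ (ε / Cd) * Cd := mul_le_mul_of_nonneg_right h12 hCdpos.le
          _ = ε := by field_simp
      have h13 : t * (‖h‖ ^ 2 / 2 + c * ‖y - p‖ * ‖h‖ ^ 2) ≤ t * Cd := by
        rw [hCd]; linarith [ht.le]
      clear_value t Cd
      linarith
    have hkey2 : ∀ h : E,
        (inner ℝ (y - p) h : ℝ) + 2 * c * ‖y - p‖ * (inner ℝ (z - p) h : ℝ) = 0 := by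
      intro h
      have h5 := hkey h
      have h6 := hkey (-h)
      rw [inner_neg_right, inner_neg_right] at h6
      linarith
    have hV : (y - p) + (2 * c * ‖y - p‖) • (z - p) = 0 := by
      have h5 := hkey2 ((y - p) + (2 * c * ‖y - p‖) • (z - p))
      have h6 : (inner ℝ ((y - p) + (2 * c * ‖y - p‖) • (z - p))
          ((y - p) + (2 * c * ‖y - p‖) • (z - p)) : ℝ) = 0 := by
        rw [inner_add_left, real_inner_smul_left]
        linarith
      exact inner_self_eq_zero.mp h6
    have hBne : ‖y - p‖ ≠ 0 := hB.ne'
    have hpeq : ‖y - p‖⁻¹ • (y - p) = (2 * c) • (p - z) := by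
      have h5 : y - p = (2 * c * ‖y - p‖) • (p - z) := by
        have h6 := add_eq_zero_iff_eq_neg.mp hV
        rw [← smul_neg, neg_sub] at h6
        exact h6
      have h7 : ‖y - p‖⁻¹ • (y - p) = ‖y - p‖⁻¹ • ((2 * c * ‖y - p‖) • (p - z)) := by
        rw [← h5]
      rw [h7, smul_smul]
      have h8 : ‖y - p‖⁻¹ * (2 * c * ‖y - p‖) = 2 * c := by field_simp
      rw [h8]
    -- Step 2 : z is a global projection of C n
    have hproj : ∀ w ∈ X, ‖z - C n‖ ≤ ‖w - C n‖ := by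
      intro w hw
      by_cases hwR : w ∈ Metric.closedBall x R
      · have hmemw : (w, (m n).2.1, (m n).2.2) ∈ K := ⟨⟨hw, hwR⟩, (hmK n).2.1, (hmK n).2.2⟩
        have hle := isMinOn_iff.mp (hmm n) _ hmemw
        simp only [hF] at hle
        rw [← hz, ← hp, ← hq, ← hcdef] at hle
        have hsum : ‖z - p‖ ^ 2 + ‖z - q‖ ^ 2 ≤ ‖w - p‖ ^ 2 + ‖w - q‖ ^ 2 := by
          have h5 : c * (‖z - p‖ ^ 2 + ‖z - q‖ ^ 2) ≤ c * (‖w - p‖ ^ 2 + ‖w - q‖ ^ 2) := by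
            linarith
          exact le_of_mul_le_mul_left h5 hcpos
        have hid : ∀ v : E, ‖v - p‖ ^ 2 + ‖v - q‖ ^ 2
            = 2 * ‖v - C n‖ ^ 2 + 2 * ‖C n - p‖ ^ 2 := by
          intro v
          have e1 : v - p = (v - C n) + (C n - p) := by abel
          have e2 : v - q = (v - C n) - (C n - p) := by
            simp only [hC]
            rw [← hp, ← hq]
            module
          rw [e1, e2]
          have h5 := parallelogram_law_with_norm ℝ (v - C n) (C n - p)
          simp only [pow_two]
          linarith
        have h6 := hid z
        have h7 := hid w
        have h8 : ‖z - C n‖ ^ 2 ≤ ‖w - C n‖ ^ 2 := by linarith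
        exact le_of_pow_le_pow_left₀ two_ne_zero (norm_nonneg _) h8
      · have hwR' : R < ‖w - x‖ := by
          rw [Metric.mem_closedBall, dist_eq_norm, not_le] at hwR
          exact hwR
        have h5 : ‖w - x‖ ≤ ‖w - C n‖ + ‖C n - x‖ := by
          calc ‖w - x‖ = ‖(w - C n) + (C n - x)‖ := by rw [sub_add_sub_cancel]
            _ ≤ _ := norm_add_le _ _
        linarith
    have hCX : dist (C n) z = Metric.infDist (C n) X := by
      refine le_antisymm ?_ (Metric.infDist_le_dist_of_mem hmzXn)
      by_contra hlt
      push_neg at hlt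
      obtain ⟨w, hwX, hwlt⟩ := (Metric.infDist_lt_iff hXne).mp hlt
      have h5 : dist (C n) z ≤ dist (C n) w := by
        rw [dist_eq_norm, dist_eq_norm, norm_sub_rev (C n) z, norm_sub_rev (C n) w]
        exact hproj w hwX
      linarith
    refine ⟨4 * c, C n - z, by positivity, ?_, ?_⟩
    · rw [hvsk, hpeq, hGn, hCn]
      module
    · rw [hxsk, show z + (C n - z) = C n by abel]
      exact ⟨hmzXn, hCX⟩
  -- conclusion
  have hNL : (‖y - zb‖⁻¹ • (y - zb) - Gb) ∈ limNormalCone X zb :=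
    ⟨xs, vs, hprox, fun k => hmzX _, hxst, hvst⟩
  have hinf_le : Metric.infDist (‖y - zb‖⁻¹ • (y - zb)) (limNormalCone X zb) ≤ ‖Gb‖ := by
    have h5 := Metric.infDist_le_dist_of_mem (x := ‖y - zb‖⁻¹ • (y - zb)) hNL
    rw [dist_eq_norm, sub_sub_cancel] at h5
    exact h5
  have hmain := hbound zb hzbX (by
      rw [dist_eq_norm, norm_sub_rev]
      have h6 : 0 ≤ μ' * ‖zb - x‖ := mul_nonneg hμ'pos.le (norm_nonneg _)
      linarith) (by rw [dist_eq_norm]; exact hzbδ.le)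
  linarith
end

section
/- If w ∈ X satisfies |w - x| < κ|x - y| where y ∈ P_Y(x), x ∈ X, and κ ≤ 1, then w ∉ Y; in particular w ≠ y, and d((w-y)/|w-y|, N_Y(y)) ≤ |w - x|/|x - y| < κ. -/
open Set Metric Filter
open scoped ENNReal Topology Classical

lemma prox_subset_lim {E : Type*} [NormedAddCommGroup E] [InnerProductSpace ℝ E]
    (Y : Set E) (y : E) (hy : y ∈ Y) : proxNormalCone Y y ⊆ limNormalCone Y y := by
  intro v hv
  exact ⟨fun _ => y, fun _ => v, fun _ => hv, fun _ => hy, tendsto_const_nhds,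
    tendsto_const_nhds⟩

theorem near_point_not_mem_and_angle_bound {E : Type*} [NormedAddCommGroup E]
    [InnerProductSpace ℝ E] [FiniteDimensional ℝ E] (X Y : Set E) (hX : IsClosed X)
    (hY : IsClosed Y) (hXne : X.Nonempty) (hYne : Y.Nonempty) (x w y : E)
    (hx : x ∈ X) (hw : w ∈ X) (hy : y ∈ projSet Y x) (κ : ℝ) (hκ : κ ≤ 1)
    (hlt : ‖w - x‖ < κ * ‖x - y‖) :
    w ∉ Y ∧ w ≠ y ∧
      Metric.infDist (‖w - y‖⁻¹ • (w - y)) (limNormalCone Y y) ≤ ‖w - x‖ / ‖x - y‖ ∧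
      ‖w - x‖ / ‖x - y‖ < κ := by
  obtain ⟨hyY, hdist⟩ := hy
  have hdist' : ‖x - y‖ = Metric.infDist x Y := by rw [← dist_eq_norm]; exact hdist
  have hwx0 : (0:ℝ) ≤ ‖w - x‖ := norm_nonneg _
  have hxy_pos : 0 < ‖x - y‖ := by
    rcases lt_or_ge 0 ‖x - y‖ with h | h
    · exact h
    · have : ‖x - y‖ = 0 := le_antisymm h (norm_nonneg _)
      nlinarith
  have hκpos : 0 < κ := by nlinarith
  have hlt1 : ‖w - x‖ < ‖x - y‖ := by nlinarith
  have hwY : w ∉ Y := by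
    intro hwY
    have h1 : Metric.infDist x Y ≤ dist x w := Metric.infDist_le_dist_of_mem hwY
    rw [← hdist, dist_eq_norm, dist_eq_norm, norm_sub_rev x w] at h1
    linarith
  have hwy : w ≠ y := fun h => hwY (h ▸ hyY)
  have hwy_pos : 0 < ‖w - y‖ := by
    rw [norm_pos_iff]
    exact sub_ne_zero_of_ne hwy
  have hratio : ‖w - x‖ / ‖x - y‖ < κ := (div_lt_iff₀ hxy_pos).mpr hlt
  refine ⟨hwY, hwy, ?_, hratio⟩
  -- notation
  set a := w - y with ha
  set b := x - y with hb
  set A := ‖a‖ with hA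
  set B := ‖b‖ with hBdef
  set c := (inner ℝ a b : ℝ) with hc
  have hab : a - b = w - x := by simp only [ha, hb]; abel
  have hnormab : ‖w - x‖ ^ 2 = A ^ 2 - 2 * c + B ^ 2 := by
    rw [← hab, hA, hBdef, hc, @norm_sub_sq_real]
  have hsq : ‖w - x‖ ^ 2 < B ^ 2 := by nlinarith
  have hcpos : 0 < c := by nlinarith [mul_pos hwy_pos hwy_pos]
  set l : ℝ := c / (A * B ^ 2) with hl
  have hlpos : 0 < l := by
    apply div_pos hcpos
    positivity
  have hmem : l • b ∈ proxNormalCone Y y := by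
    refine ⟨l, b, le_of_lt hlpos, rfl, ?_⟩
    have : y + b = x := by simp only [hb]; abel
    rw [this]
    exact ⟨hyY, hdist⟩
  have hmem' : l • b ∈ limNormalCone Y y := prox_subset_lim Y y hyY hmem
  have hle : Metric.infDist (‖w - y‖⁻¹ • (w - y)) (limNormalCone Y y)
      ≤ dist (‖w - y‖⁻¹ • (w - y)) (l • b) := Metric.infDist_le_dist_of_mem hmem'
  refine le_trans hle ?_
  rw [dist_eq_norm]
  have hgoal_sq : ‖A⁻¹ • a - l • b‖ ^ 2 ≤ (‖w - x‖ / B) ^ 2 := by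
    have hexp : ‖A⁻¹ • a - l • b‖ ^ 2
        = A⁻¹ ^ 2 * A ^ 2 - 2 * (A⁻¹ * l * c) + l ^ 2 * B ^ 2 := by
      rw [@norm_sub_sq_real, real_inner_smul_left, real_inner_smul_right,
        norm_smul, norm_smul]
      have e1 : ‖A⁻¹‖ = A⁻¹ := by
        rw [norm_inv, Real.norm_eq_abs, abs_of_pos hwy_pos]
      have e2 : ‖l‖ = l := by rw [Real.norm_eq_abs, abs_of_pos hlpos]
      rw [e1, e2, ← hA, ← hBdef, ← hc]
      ring
    rw [hexp, hl]
    have hAne : A ≠ 0 := ne_of_gt hwy_pos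
    have hBne : B ≠ 0 := ne_of_gt hxy_pos
    have h1 : A⁻¹ ^ 2 * A ^ 2 = 1 := by field_simp
    have h2 : A⁻¹ * (c / (A * B ^ 2)) * c = c ^ 2 / (A ^ 2 * B ^ 2) := by
      field_simp
    have h3 : (c / (A * B ^ 2)) ^ 2 * B ^ 2 = c ^ 2 / (A ^ 2 * B ^ 2) := by
      field_simp
    rw [h1, h2, h3]
    have hA2B2 : (0:ℝ) < A ^ 2 * B ^ 2 := by positivity
    have hB2 : (0:ℝ) < B ^ 2 := by positivity
    have hL : 1 - 2 * (c ^ 2 / (A ^ 2 * B ^ 2)) + c ^ 2 / (A ^ 2 * B ^ 2)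
        = (A ^ 2 * B ^ 2 - c ^ 2) / (A ^ 2 * B ^ 2) := by field_simp; ring
    rw [hL, div_pow, hnormab, div_le_div_iff₀ hA2B2 hB2]
    nlinarith [sq_nonneg (A ^ 2 - c), hB2.le, mul_nonneg (sq_nonneg (A ^ 2 - c)) hB2.le]
  have := le_of_pow_le_pow_left₀ two_ne_zero (div_nonneg hwx0 hxy_pos.le) hgoal_sq
  simpa [ha, hA, hBdef] using this
end

section
/- (Transversality implies intrinsic transversality quantitatively) Suppose closed sets X, Y ⊂ E satisfy N_X(z) ∩ (-N_Y(z)) = {0} at z ∈ X ∩ Y. Then the quantity κ₀ := min over unit vectors u of max{ d(u, N_Y(z)), d(u, -N_X(z)) } is strictly positive, and for every κ < κ₀, X and Y are strongly intrinsically transversal at z with constant κ. -/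
open Set Metric Filter
open scoped ENNReal Topology Classical

noncomputable section
open Set Metric Filter
section Aux

variable {E : Type*} [NormedAddCommGroup E] [InnerProductSpace ℝ E]

lemma aux_tendsto_of_dist_le {c d : ℕ → E} {L : E} (h : ∀ n, dist (c n) (d n) ≤ 1/(n+1))
    (hd : Tendsto d atTop (𝓝 L)) : Tendsto c atTop (𝓝 L) := by
  rw [tendsto_iff_dist_tendsto_zero] at hd ⊢
  apply squeeze_zero (fun n => dist_nonneg)
    (fun n => (dist_triangle (c n) (d n) L).trans (add_le_add (h n) le_rfl))
  simpa using tendsto_one_div_add_atTop_nhds_zero_nat.add hd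

lemma zero_mem_proxNormalCone {X : Set E} {x : E} (hx : x ∈ X) : 0 ∈ proxNormalCone X x :=
  ⟨0, 0, le_rfl, by simp, by simp [projSet, hx, Metric.infDist_zero_of_mem hx]⟩

lemma zero_mem_limNormalCone {X : Set E} {x : E} (hx : x ∈ X) : 0 ∈ limNormalCone X x :=
  ⟨fun _ => x, fun _ => 0, fun _ => zero_mem_proxNormalCone hx, fun _ => hx,
    tendsto_const_nhds, tendsto_const_nhds⟩

lemma limNormalCone_osc {X : Set E} {z v : E} {xs vs : ℕ → E}
    (hxX : ∀ n, xs n ∈ X) (hv : ∀ n, vs n ∈ limNormalCone X (xs n))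
    (hxz : Tendsto xs atTop (𝓝 z)) (hvv : Tendsto vs atTop (𝓝 v)) :
    v ∈ limNormalCone X z := by
  choose as bs h1 h2 h3 h4 using hv
  have key : ∀ n : ℕ, ∃ m, dist (as n m) (xs n) < 1/(n+1) ∧ dist (bs n m) (vs n) < 1/(n+1) := by
    intro n
    obtain ⟨N1, hN1⟩ := Metric.tendsto_atTop.mp (h3 n) (1/(n+1)) (by positivity)
    obtain ⟨N2, hN2⟩ := Metric.tendsto_atTop.mp (h4 n) (1/(n+1)) (by positivity)
    exact ⟨max N1 N2, hN1 _ (le_max_left _ _), hN2 _ (le_max_right _ _)⟩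
  choose m hm1 hm2 using key
  exact ⟨fun n => as n (m n), fun n => bs n (m n), fun n => h1 n (m n), fun n => h2 n (m n),
    aux_tendsto_of_dist_le (fun n => (hm1 n).le) hxz,
    aux_tendsto_of_dist_le (fun n => (hm2 n).le) hvv⟩

lemma limNormalCone_isClosed {X : Set E} {x : E} (hx : x ∈ X) :
    IsClosed (limNormalCone X x) := by
  apply IsSeqClosed.isClosed
  intro vs v hvs hv
  exact limNormalCone_osc (fun _ => hx) hvs tendsto_const_nhds hv

end Aux

end

theorem transversality_implies_strong_intrinsic {E : Type*} [NormedAddCommGroup E]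
    [InnerProductSpace ℝ E] [FiniteDimensional ℝ E] [Nontrivial E]
    (X Y : Set E) (hX : IsClosed X) (hY : IsClosed Y) (z : E) (hz : z ∈ X ∩ Y)
    (htv : limNormalCone X z ∩ -(limNormalCone Y z) = {0}) :
    0 < sInf {r : ℝ | ∃ u : E, ‖u‖ = 1 ∧
        r = max (Metric.infDist u (limNormalCone Y z))
                (Metric.infDist u (-(limNormalCone X z)))} ∧
    ∀ κ : ℝ, κ < sInf {r : ℝ | ∃ u : E, ‖u‖ = 1 ∧
        r = max (Metric.infDist u (limNormalCone Y z))
                (Metric.infDist u (-(limNormalCone X z)))} →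
      StrongIntrinsicallyTransversal X Y z κ := by
  classical
  set NY := limNormalCone Y z with hNY
  set NX := limNormalCone X z with hNX
  set S : Set ℝ := {r : ℝ | ∃ u : E, ‖u‖ = 1 ∧
      r = max (Metric.infDist u NY) (Metric.infDist u (-NX))} with hS
  set f : E → ℝ := fun u => max (Metric.infDist u NY) (Metric.infDist u (-NX)) with hf
  have hfc : Continuous f :=
    (Metric.continuous_infDist_pt _).max (Metric.continuous_infDist_pt _)
  have hsph : (Metric.sphere (0:E) 1).Nonempty := NormedSpace.sphere_nonempty.mpr zero_le_one
  obtain ⟨u₀, hu₀s, hu₀min⟩ :=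
    (isCompact_sphere (0:E) 1).exists_isMinOn hsph hfc.continuousOn
  have hu₀ : ‖u₀‖ = 1 := by simpa using hu₀s
  have hclY : IsClosed NY := limNormalCone_isClosed hz.2
  have hclX : IsClosed NX := limNormalCone_isClosed hz.1
  have hneY : NY.Nonempty := ⟨0, zero_mem_limNormalCone hz.2⟩
  have hneX : (-NX).Nonempty := ⟨0, by simpa using zero_mem_limNormalCone hz.1⟩
  -- positivity of the min value
  have hfu₀ : 0 < f u₀ := by
    rcases lt_or_ge 0 (f u₀) with h | h
    · exact h
    · exfalso
      have h1 : Metric.infDist u₀ NY = 0 :=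
        le_antisymm ((le_max_left _ _).trans h) Metric.infDist_nonneg
      have h2 : Metric.infDist u₀ (-NX) = 0 :=
        le_antisymm ((le_max_right _ _).trans h) Metric.infDist_nonneg
      have hm1 : u₀ ∈ NY := (hclY.mem_iff_infDist_zero hneY).mpr h1
      have hm2 : u₀ ∈ -NX := (hclX.neg.mem_iff_infDist_zero hneX).mpr h2
      have : -u₀ ∈ NX ∩ -NY := ⟨by simpa using hm2, by simpa using hm1⟩
      rw [htv] at this
      have : u₀ = 0 := by simpa [neg_eq_zero] using this
      rw [this] at hu₀
      simp at hu₀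
  have hSne : S.Nonempty := ⟨f u₀, u₀, hu₀, rfl⟩
  have hSbdd : BddBelow S := ⟨0, by
    rintro r ⟨u, hu1, rfl⟩
    exact le_trans Metric.infDist_nonneg (le_max_left _ _)⟩
  have hlb : f u₀ ≤ sInf S := by
    apply le_csInf hSne
    rintro r ⟨u, hu1, rfl⟩
    exact hu₀min (by simpa using hu1)
  have hκ₀pos : 0 < sInf S := lt_of_lt_of_le hfu₀ hlb
  refine ⟨hκ₀pos, ?_⟩
  intro κ hκ
  rcases le_or_gt κ 0 with hκ0 | hκ0
  · exact ⟨Set.univ, Filter.univ_mem, fun x _ y _ =>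
      hκ0.trans (le_trans Metric.infDist_nonneg (le_max_left _ _))⟩
  by_contra hcon
  unfold StrongIntrinsicallyTransversal at hcon
  push_neg at hcon
  have hsel : ∀ n : ℕ, ∃ x y, x ∈ X ∧ x ∉ Y ∧ x ∈ Metric.ball z (1/(n+1)) ∧
      y ∈ Y ∧ y ∉ X ∧ y ∈ Metric.ball z (1/(n+1)) ∧
      max (Metric.infDist (‖x - y‖⁻¹ • (x - y)) (limNormalCone Y y))
          (Metric.infDist (‖x - y‖⁻¹ • (x - y)) (-(limNormalCone X x))) < κ := by
    intro n
    obtain ⟨x, hx, y, hy, hlt⟩ := hcon (Metric.ball z (1/(n+1)))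
      (Metric.ball_mem_nhds z (by positivity))
    exact ⟨x, y, hx.1.1, hx.1.2, hx.2, hy.1.1, hy.1.2, hy.2, hlt⟩
  choose xs ys hxsX hxsY hxsB hysY hysX hysB hmax using hsel
  set us : ℕ → E := fun n => ‖xs n - ys n‖⁻¹ • (xs n - ys n) with hus
  have hxy : ∀ n, xs n - ys n ≠ 0 := fun n =>
    sub_ne_zero.mpr (fun h => hxsY n (h ▸ hysY n))
  have husn : ∀ n, ‖us n‖ = 1 := by
    intro n
    rw [hus]
    rw [norm_smul, norm_inv, norm_norm]
    field_simp [norm_ne_zero_iff.mpr (hxy n)]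
  have hneY' : ∀ n, (limNormalCone Y (ys n)).Nonempty :=
    fun n => ⟨0, zero_mem_limNormalCone (hysY n)⟩
  have hneX' : ∀ n, (-(limNormalCone X (xs n))).Nonempty :=
    fun n => ⟨0, by simpa using zero_mem_limNormalCone (hxsX n)⟩
  have hsel2 : ∀ n : ℕ, ∃ v w, v ∈ limNormalCone Y (ys n) ∧ dist (us n) v < κ ∧
      w ∈ -(limNormalCone X (xs n)) ∧ dist (us n) w < κ := by
    intro n
    obtain ⟨v, hv, hvd⟩ := (Metric.infDist_lt_iff (hneY' n)).mp
      (lt_of_le_of_lt (le_max_left _ _) (hmax n))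
    obtain ⟨w, hw, hwd⟩ := (Metric.infDist_lt_iff (hneX' n)).mp
      (lt_of_le_of_lt (le_max_right _ _) (hmax n))
    exact ⟨v, w, hv, hvd, hw, hwd⟩
  choose vs ws hvsm hvsd hwsm hwsd using hsel2
  -- boundedness and compactness
  set K := Metric.closedBall (0:E) (1+κ) with hK
  have hballmem : ∀ (c : ℕ → E), (∀ n, dist (us n) (c n) < κ) → ∀ n, c n ∈ K := by
    intro c hc n
    rw [hK, Metric.mem_closedBall, dist_zero_right]
    calc ‖c n‖ ≤ dist (c n) (us n) + ‖us n‖ := by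
          simpa [dist_zero_right] using dist_triangle (c n) (us n) 0
      _ ≤ κ + 1 := by
          rw [dist_comm]
          exact add_le_add (hc n).le (husn n).le
      _ = 1 + κ := by ring
  have husK : ∀ n, us n ∈ K := by
    intro n
    rw [hK, Metric.mem_closedBall, dist_zero_right, husn n]
    linarith
  set p : ℕ → E × E × E := fun n => (us n, vs n, ws n) with hp
  have hpK : ∀ n, p n ∈ K ×ˢ (K ×ˢ K) := fun n =>
    ⟨husK n, hballmem vs hvsd n, hballmem ws hwsd n⟩
  obtain ⟨a, _, φ, hφ, hconv⟩ :=
    ((isCompact_closedBall (0:E) (1+κ)).prod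
      ((isCompact_closedBall (0:E) (1+κ)).prod
        (isCompact_closedBall (0:E) (1+κ)))).tendsto_subseq hpK
  obtain ⟨u, v, w⟩ := a
  have hconvu : Tendsto (fun n => us (φ n)) atTop (𝓝 u) :=
    (continuous_fst.tendsto _).comp hconv
  have hconvv : Tendsto (fun n => vs (φ n)) atTop (𝓝 v) :=
    (continuous_fst.tendsto _).comp ((continuous_snd.tendsto _).comp hconv)
  have hconvw : Tendsto (fun n => ws (φ n)) atTop (𝓝 w) :=
    (continuous_snd.tendsto _).comp ((continuous_snd.tendsto _).comp hconv)
  have hdsub : ∀ (c : ℕ → E), (∀ n : ℕ, c n ∈ Metric.ball z (1/(n+1))) →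
      Tendsto (fun n => c (φ n)) atTop (𝓝 z) := by
    intro c hc
    apply aux_tendsto_of_dist_le (d := fun _ => z)
    · intro n
      have h1 : dist (c (φ n)) z < 1/((φ n : ℝ) + 1) := by
        simpa [Metric.mem_ball] using hc (φ n)
      have h2 : (1:ℝ)/((φ n : ℝ) + 1) ≤ 1/((n:ℝ)+1) := by
        apply one_div_le_one_div_of_le (by positivity)
        have h3 : n ≤ φ n := hφ.le_apply
        have h4 : (n:ℝ) ≤ (φ n : ℝ) := by exact_mod_cast h3
        linarith
      simpa using h1.le.trans h2
    · exact tendsto_const_nhds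
  have hxz : Tendsto (fun n => xs (φ n)) atTop (𝓝 z) := hdsub xs hxsB
  have hyz : Tendsto (fun n => ys (φ n)) atTop (𝓝 z) := hdsub ys hysB
  -- limits are in the cones
  have hvN : v ∈ NY :=
    limNormalCone_osc (fun n => hysY (φ n)) (fun n => hvsm (φ n)) hyz hconvv
  have hwN : w ∈ -NX := by
    have : -w ∈ NX := by
      apply limNormalCone_osc (fun n => hxsX (φ n)) (fun n => by
        simpa using hwsm (φ n)) hxz
      exact hconvw.neg
    simpa using this
  have hun : ‖u‖ = 1 := by
    have h1 : Tendsto (fun n => ‖us (φ n)‖) atTop (𝓝 ‖u‖) := hconvu.norm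
    have h2 : Tendsto (fun n => ‖us (φ n)‖) atTop (𝓝 1) := by
      simpa [husn] using (tendsto_const_nhds : Tendsto (fun _ : ℕ => (1:ℝ)) atTop (𝓝 1))
    exact tendsto_nhds_unique h1 h2
  have hduv : dist u v ≤ κ := by
    have h1 : Tendsto (fun n => dist (us (φ n)) (vs (φ n))) atTop (𝓝 (dist u v)) :=
      hconvu.dist hconvv
    exact le_of_tendsto h1 (Filter.Eventually.of_forall fun n => (hvsd (φ n)).le)
  have hduw : dist u w ≤ κ := by
    have h1 : Tendsto (fun n => dist (us (φ n)) (ws (φ n))) atTop (𝓝 (dist u w)) :=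
      hconvu.dist hconvw
    exact le_of_tendsto h1 (Filter.Eventually.of_forall fun n => (hwsd (φ n)).le)
  have hfu : f u ≤ κ :=
    max_le ((Metric.infDist_le_dist_of_mem hvN).trans hduv)
      ((Metric.infDist_le_dist_of_mem hwN).trans hduw)
  have : sInf S ≤ f u := csInf_le hSbdd ⟨u, hun, rfl⟩
  linarith
end

section
/- (Relative transversality and relative interiors) Two closed convex sets X, Y ⊂ E intersect relatively transversally at a point z ∈ X ∩ Y if and only if the relative interiors of X and Y intersect. -/
open Set Metric Filter
open scoped ENNReal Topology Classical

open scoped Pointwise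

section AuxRel

local notation "⟪" x ", " y "⟫" => @inner ℝ _ _ x y

variable {F : Type*} [NormedAddCommGroup F] [InnerProductSpace ℝ F]

lemma mem_intrinsicInterior_iff_ball {s : Set F} {p : F} :
    p ∈ intrinsicInterior ℝ s ↔
      p ∈ affineSpan ℝ s ∧ ∃ ε > (0:ℝ), ∀ q, q ∈ affineSpan ℝ s → dist q p < ε → q ∈ s := by
  constructor
  · rintro ⟨p', hp', rfl⟩
    rw [mem_interior_iff_mem_nhds, Metric.mem_nhds_iff] at hp'
    obtain ⟨ε, hε, hball⟩ := hp'
    refine ⟨p'.2, ε, hε, fun q hq hd => ?_⟩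
    exact hball (show (⟨q, hq⟩ : affineSpan ℝ s) ∈ Metric.ball p' ε by
      rw [Metric.mem_ball, Subtype.dist_eq]; exact hd)
  · rintro ⟨hpspan, ε, hε, h⟩
    refine ⟨⟨p, hpspan⟩, ?_, rfl⟩
    rw [mem_interior_iff_mem_nhds, Metric.mem_nhds_iff]
    exact ⟨ε, hε, fun q hq => h q q.2 (by simpa [Metric.mem_ball, Subtype.dist_eq] using hq)⟩

lemma segment_mem_intrinsicInterior {s : Set F} (hs : Convex ℝ s) {x y : F}
    (hx : x ∈ s) (hy : y ∈ intrinsicInterior ℝ s) {t : ℝ} (ht0 : 0 < t) (ht1 : t ≤ 1) :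
    x + t • (y - x) ∈ intrinsicInterior ℝ s := by
  rw [mem_intrinsicInterior_iff_ball] at hy ⊢
  obtain ⟨hyspan, ε, hε, hb⟩ := hy
  have hxspan : x ∈ affineSpan ℝ s := subset_affineSpan ℝ s hx
  have hzspan : x + t • (y - x) ∈ affineSpan ℝ s := by
    have := AffineSubspace.smul_vsub_vadd_mem (affineSpan ℝ s) t hyspan hxspan hxspan
    simpa [vsub_eq_sub, vadd_eq_add, add_comm] using this
  refine ⟨hzspan, t * ε, by positivity, fun q hq hd => ?_⟩
  set w := y + t⁻¹ • (q - (x + t • (y - x))) with hw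
  have hwspan : w ∈ affineSpan ℝ s := by
    have := AffineSubspace.smul_vsub_vadd_mem (affineSpan ℝ s) t⁻¹ hq hzspan hyspan
    simpa [vsub_eq_sub, vadd_eq_add, hw, add_comm] using this
  have hwdist : dist w y < ε := by
    rw [hw, dist_eq_norm]
    have : y + t⁻¹ • (q - (x + t • (y - x))) - y = t⁻¹ • (q - (x + t • (y - x))) := by abel
    rw [this, norm_smul, Real.norm_eq_abs, abs_of_pos (by positivity)]
    rw [dist_eq_norm] at hd
    calc t⁻¹ * ‖q - (x + t • (y - x))‖ < t⁻¹ * (t * ε) := by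
          apply mul_lt_mul_of_pos_left hd (by positivity)
      _ = ε := by field_simp
  have hws : w ∈ s := hb w hwspan hwdist
  have hq' : (1 - t) • x + t • w = q := by
    rw [hw]
    rw [smul_add, smul_smul, mul_inv_cancel₀ ht0.ne']
    module
  have := hs hx hws (a := 1 - t) (b := t) (by linarith) ht0.le (by ring)
  rwa [hq'] at this

lemma combo_mem_intrinsicInterior {s : Set F} (hs : Convex ℝ s) {x y : F}
    (hx : x ∈ intrinsicInterior ℝ s) (hy : y ∈ intrinsicInterior ℝ s) {a b : ℝ}
    (ha : 0 ≤ a) (hb : 0 ≤ b) (hab : a + b = 1) :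
    a • x + b • y ∈ intrinsicInterior ℝ s := by
  rcases hb.eq_or_lt with hb0 | hb0
  · have : a = 1 := by linarith [hab, hb0]
    simp [this, ← hb0, hx]
  · have heq : a • x + b • y = x + b • (y - x) := by
      have : a = 1 - b := by linarith
      rw [this]; module
    rw [heq]
    exact segment_mem_intrinsicInterior hs (intrinsicInterior_subset hx) hy hb0 (by linarith)

lemma inner_nonpos_of_closure {v : F} {C : Set F} (hC : ∀ c ∈ C, ⟪v, c⟫ ≤ 0)
    {x : F} (hx : x ∈ closure C) : ⟪v, x⟫ ≤ 0 := by
  have hcl : IsClosed {w : F | ⟪v, w⟫ ≤ 0} :=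
    isClosed_le (continuous_const.inner continuous_id) continuous_const
  exact closure_minimal hC hcl hx

lemma exists_inner_nonpos_of_not_mem_zero {F : Type*} [NormedAddCommGroup F]
    [InnerProductSpace ℝ F] [FiniteDimensional ℝ F]
    {C : Set F} (hC : Convex ℝ C) {c₀ : F} (hc₀ : c₀ ∈ C) (h0 : (0:F) ∉ C) :
    ∃ v ∈ Submodule.span ℝ C, v ≠ 0 ∧ ∀ c ∈ C, ⟪v, c⟫ ≤ 0 := by
  classical
  set W : Submodule ℝ F := Submodule.span ℝ ((fun c => c - c₀) '' C) with hWdef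
  have hWle : W ≤ Submodule.span ℝ C := by
    rw [hWdef, Submodule.span_le]
    rintro _ ⟨c, hc, rfl⟩
    exact sub_mem (Submodule.subset_span hc) (Submodule.subset_span hc₀)
  by_cases hmem : c₀ ∈ W
  · -- c₀ ∈ W : work inside W
    have hsub : C ⊆ (W : Set F) := by
      intro c hc
      have h1 : c - c₀ ∈ W := Submodule.subset_span ⟨c, hc, rfl⟩
      have := add_mem h1 hmem
      simpa using this
    set Cw : Set W := (W.subtype) ⁻¹' C with hCwdef
    have hCw : Convex ℝ Cw := hC.linear_preimage W.subtype
    have h0w : (0:W) ∉ Cw := by simpa [hCwdef] using h0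
    have hc₀w : (⟨c₀, hmem⟩ : W) ∈ Cw := hc₀
    have hspan : Submodule.span ℝ ((fun c : W => c - ⟨c₀, hmem⟩) '' Cw) = ⊤ := by
      apply Submodule.map_injective_of_injective W.injective_subtype
      rw [Submodule.map_span, Submodule.map_top, Submodule.range_subtype]
      have himg : W.subtype '' ((fun c : W => c - ⟨c₀, hmem⟩) '' Cw)
          = (fun c => c - c₀) '' C := by
        ext u
        constructor
        · rintro ⟨_, ⟨cw, hcw, rfl⟩, rfl⟩
          exact ⟨cw, hcw, by simp⟩
        · rintro ⟨c, hc, rfl⟩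
          exact ⟨⟨c, hsub hc⟩ - ⟨c₀, hmem⟩, ⟨⟨c, hsub hc⟩, hc, rfl⟩, by simp⟩
      rw [himg, hWdef]
    have haff : affineSpan ℝ Cw = ⊤ := by
      rw [AffineSubspace.affineSpan_eq_top_iff_vectorSpan_eq_top_of_nonempty ℝ W W ⟨_, hc₀w⟩]
      apply eq_top_iff.2
      rw [← hspan]
      apply Submodule.span_le.2
      rintro _ ⟨c, hc, rfl⟩
      have := vsub_mem_vectorSpan ℝ hc hc₀w
      simpa [vsub_eq_sub] using this
    obtain ⟨a, ha⟩ : (interior Cw).Nonempty := by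
      rw [hCw.interior_nonempty_iff_affineSpan_eq_top]; exact haff
    obtain ⟨f, u, hfu, hu0⟩ :=
      geometric_hahn_banach_open hCw.interior isOpen_interior (convex_singleton (0:W))
        (Set.disjoint_singleton_right.2 (fun h => h0w (interior_subset h)))
    have hu : u ≤ 0 := by simpa using hu0 0 rfl
    have hCle : ∀ c ∈ Cw, f c ≤ u := by
      intro c hc
      set g : ℕ → ℝ := fun n => (1:ℝ)/(n+1) with hg
      have hg0 : ∀ n, 0 < g n := fun n => by positivity
      have hg1 : ∀ n, g n ≤ 1 := by
        intro n
        rw [hg]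
        rw [div_le_one (by positivity)]
        simp
      have hfn : ∀ n, f (g n • a + (1 - g n) • c) < u := by
        intro n
        exact hfu _ (hCw.combo_interior_closure_mem_interior ha (subset_closure hc)
          (hg0 n) (by linarith [hg1 n]) (by ring))
      have htend : Tendsto (fun n => f (g n • a + (1 - g n) • c)) atTop (𝓝 (f c)) := by
        have h1 : Tendsto g atTop (𝓝 0) := tendsto_one_div_add_atTop_nhds_zero_nat
        have h2 : Tendsto (fun n => g n • a + (1 - g n) • c) atTop
            (𝓝 ((0:ℝ) • a + (1 - (0:ℝ)) • c)) := by
          exact ((h1.smul_const a).add (((tendsto_const_nhds.sub h1)).smul_const c))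
        simp only [zero_smul, sub_zero, one_smul, zero_add] at h2
        exact (f.continuous.tendsto c).comp h2
      exact le_of_tendsto htend (Filter.Eventually.of_forall fun n => (hfn n).le)
    set v' := (InnerProductSpace.toDual ℝ W).symm f with hv'
    have hv'app : ∀ w : W, ⟪v', w⟫ = f w := fun w => InnerProductSpace.toDual_symm_apply
    have hv'ne : v' ≠ 0 := by
      intro h
      have hf0 : f = 0 := by
        have := congrArg (InnerProductSpace.toDual ℝ W) h
        simpa [hv'] using this
      have := hfu a ha
      rw [hf0] at this
      simp at this
      linarith
    refine ⟨(v' : F), hWle v'.2, by simpa using hv'ne, ?_⟩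
    intro c hc
    have h1 : ⟪(v' : F), c⟫ = ⟪v', (⟨c, hsub hc⟩ : W)⟫ := (Submodule.coe_inner W v' ⟨c, hsub hc⟩).symm
    rw [h1, hv'app]
    exact le_trans (hCle _ hc) hu
  · -- c₀ ∉ W : use orthogonal complement direction
    set r : F := c₀ - (Submodule.orthogonalProjectionOnto W c₀ : F) with hr
    have hrW : r ∈ Wᗮ := Submodule.sub_starProjection_mem_orthogonal (K := W) c₀
    have hrne : r ≠ 0 := by
      intro h
      apply hmem
      have : c₀ = (Submodule.orthogonalProjectionOnto W c₀ : F) := by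
        rw [hr, sub_eq_zero] at h; exact h
      rw [this]; exact (Submodule.orthogonalProjectionOnto W c₀).2
    refine ⟨-r, neg_mem (sub_mem (Submodule.subset_span hc₀)
      (hWle (Submodule.orthogonalProjectionOnto W c₀).2)), neg_ne_zero.2 hrne, ?_⟩
    intro c hc
    have hcW : c - c₀ ∈ W := Submodule.subset_span ⟨c, hc, rfl⟩
    have h1 : ⟪r, c - c₀⟫ = 0 := by
      rw [real_inner_comm]
      exact hrW _ hcW
    have h2 : ⟪r, (Submodule.orthogonalProjectionOnto W c₀ : F)⟫ = 0 := by
      rw [real_inner_comm]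
      exact hrW _ (Submodule.orthogonalProjectionOnto W c₀).2
    have h3 : ⟪r, c⟫ = ‖r‖^2 := by
      have hc' : c = (Submodule.orthogonalProjectionOnto W c₀ : F) + r + (c - c₀) := by
        rw [hr]; abel
      rw [hc', inner_add_right, inner_add_right, h1, h2, real_inner_self_eq_norm_sq]
      ring
    rw [inner_neg_left, h3]
    simpa using neg_nonpos.mpr (sq_nonneg ‖r‖)

lemma inner_eq_zero_of_intrinsic_max {s : Set F} {p v zz : F} (hp : p ∈ intrinsicInterior ℝ s)
    (h : ∀ x ∈ s, ⟪v, x - zz⟫ ≤ 0) (hpz : ⟪v, p - zz⟫ = 0) :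
    ∀ x ∈ s, ⟪v, x - p⟫ = 0 := by
  intro x hx
  have hA : ⟪v, x - p⟫ ≤ 0 := by
    have h1 := h x hx
    have : ⟪v, x - p⟫ = ⟪v, x - zz⟫ - ⟪v, p - zz⟫ := by
      rw [← inner_sub_right]
      congr 1
      abel
    rw [this, hpz]; linarith
  have hB : ⟪v, p - x⟫ ≤ 0 := by
    rw [mem_intrinsicInterior_iff_ball] at hp
    obtain ⟨hpspan, ε, hε, hball⟩ := hp
    set t : ℝ := ε / (2 * (‖p - x‖ + 1)) with ht'
    have ht : 0 < t := by positivity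
    have hq : p + t • (p - x) ∈ s := by
      apply hball
      · have := AffineSubspace.smul_vsub_vadd_mem (affineSpan ℝ s) t hpspan
          (subset_affineSpan ℝ s hx) hpspan
        simpa [vsub_eq_sub, vadd_eq_add, add_comm] using this
      · rw [dist_eq_norm]
        have : p + t • (p - x) - p = t • (p - x) := by abel
        rw [this, norm_smul, Real.norm_eq_abs, abs_of_pos ht, ht']
        rw [div_mul_eq_mul_div, div_lt_iff₀ (by positivity)]
        nlinarith [norm_nonneg (p - x)]
    have h1 := h _ hq
    have h2 : ⟪v, (p + t • (p - x)) - zz⟫ = ⟪v, p - zz⟫ + t * ⟪v, p - x⟫ := by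
      have : (p + t • (p - x)) - zz = (p - zz) + t • (p - x) := by abel
      rw [this, inner_add_right, real_inner_smul_right]
    rw [h2, hpz, zero_add] at h1
    nlinarith
  have hC : ⟪v, p - x⟫ = - ⟪v, x - p⟫ := by
    rw [show p - x = -(x - p) by abel, inner_neg_right]
  linarith

end AuxRel

theorem relative_transversality_iff_relative_interiors {E : Type*} [NormedAddCommGroup E]
    [InnerProductSpace ℝ E] [FiniteDimensional ℝ E] (X Y : Set E)
    (hXc : IsClosed X) (hYc : IsClosed Y) (hXv : Convex ℝ X) (hYv : Convex ℝ Y)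
    (z : E) (hz : z ∈ X ∩ Y) :
    (∀ v ∈ Submodule.span ℝ ((fun w => w - z) '' (X ∪ Y)),
        (∀ x ∈ X, (inner ℝ v (x - z) : ℝ) ≤ 0) →
        (∀ y ∈ Y, (0:ℝ) ≤ inner ℝ v (y - z)) → v = 0)
      ↔ (intrinsicInterior ℝ X ∩ intrinsicInterior ℝ Y).Nonempty := by
  constructor
  · intro hcond
    by_contra hne
    rw [Set.not_nonempty_iff_eq_empty] at hne
    obtain ⟨a, ha⟩ : (intrinsicInterior ℝ X).Nonempty :=
      Set.Nonempty.intrinsicInterior hXv ⟨z, hz.1⟩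
    obtain ⟨b, hb⟩ : (intrinsicInterior ℝ Y).Nonempty :=
      Set.Nonempty.intrinsicInterior hYv ⟨z, hz.2⟩
    set C : Set E :=
      {c | ∃ x ∈ intrinsicInterior ℝ X, ∃ y ∈ intrinsicInterior ℝ Y, c = x - y} with hCdef
    have hCc : Convex ℝ C := by
      rintro c1 ⟨x1, hx1, y1, hy1, rfl⟩ c2 ⟨x2, hx2, y2, hy2, rfl⟩ s t hs ht hst
      exact ⟨s • x1 + t • x2, combo_mem_intrinsicInterior hXv hx1 hx2 hs ht hst,
        s • y1 + t • y2, combo_mem_intrinsicInterior hYv hy1 hy2 hs ht hst, by module⟩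
    have h0C : (0:E) ∉ C := by
      rintro ⟨x, hx, y, hy, hxy⟩
      have : x = y := by
        have := hxy.symm
        rwa [sub_eq_zero] at this
      rw [this] at hx
      have : y ∈ intrinsicInterior ℝ X ∩ intrinsicInterior ℝ Y := ⟨hx, hy⟩
      rw [hne] at this
      exact this
    have hc₀ : a - b ∈ C := ⟨a, ha, b, hb, rfl⟩
    obtain ⟨v, hvspan, hvne, hvle⟩ := exists_inner_nonpos_of_not_mem_zero hCc hc₀ h0C
    have hle : Submodule.span ℝ C ≤ Submodule.span ℝ ((fun w => w - z) '' (X ∪ Y)) := by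
      apply Submodule.span_le.2
      rintro _ ⟨x, hx, y, hy, rfl⟩
      have hx' : x - z ∈ Submodule.span ℝ ((fun w => w - z) '' (X ∪ Y)) :=
        Submodule.subset_span ⟨x, Or.inl (intrinsicInterior_subset hx), rfl⟩
      have hy' : y - z ∈ Submodule.span ℝ ((fun w => w - z) '' (X ∪ Y)) :=
        Submodule.subset_span ⟨y, Or.inr (intrinsicInterior_subset hy), rfl⟩
      have := sub_mem hx' hy'
      simpa using this
    have hvclos : ∀ c ∈ closure C, (inner ℝ v c : ℝ) ≤ 0 := fun c hc =>
      inner_nonpos_of_closure hvle hc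
    have hg1 : ∀ n : ℕ, (0:ℝ) < 1/(n+1) := fun n => by positivity
    have hg2 : ∀ n : ℕ, (1:ℝ)/(n+1) ≤ 1 := by
      intro n; rw [div_le_one (by positivity)]; simp
    have htend0 : Tendsto (fun n : ℕ => (1:ℝ)/(n+1)) atTop (𝓝 0) :=
      tendsto_one_div_add_atTop_nhds_zero_nat
    have hmemcl : ∀ p q : E, p ∈ X → q ∈ Y → p - q ∈ closure C := by
      intro p q hp hq
      apply mem_closure_of_tendsto (f := fun n : ℕ =>
        (p + ((1:ℝ)/(n+1)) • (a - p)) - (q + ((1:ℝ)/(n+1)) • (b - q))) (b := atTop)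
      · have h2 : Tendsto (fun n : ℕ =>
            (p - q) + ((1:ℝ)/(n+1)) • ((a - p) - (b - q))) atTop
            (𝓝 ((p - q) + (0:ℝ) • ((a - p) - (b - q)))) :=
          tendsto_const_nhds.add (htend0.smul_const _)
        simp only [zero_smul, add_zero] at h2
        convert h2 using 2 with n
        module
      · apply Filter.Eventually.of_forall
        intro n
        exact ⟨p + ((1:ℝ)/(n+1)) • (a - p),
          segment_mem_intrinsicInterior hXv hp ha (hg1 n) (hg2 n),
          q + ((1:ℝ)/(n+1)) • (b - q),
          segment_mem_intrinsicInterior hYv hq hb (hg1 n) (hg2 n), rfl⟩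
    have hX' : ∀ x ∈ X, (inner ℝ v (x - z) : ℝ) ≤ 0 := fun x hx =>
      hvclos _ (hmemcl x z hx hz.2)
    have hY' : ∀ y ∈ Y, (0:ℝ) ≤ inner ℝ v (y - z) := by
      intro y hy
      have := hvclos _ (hmemcl z y hz.1 hy)
      have h2 : (inner ℝ v (z - y) : ℝ) = - inner ℝ v (y - z) := by
        rw [show z - y = -(y - z) by abel, inner_neg_right]
      linarith [h2 ▸ this]
    exact hvne (hcond v (hle hvspan) hX' hY')
  · rintro ⟨p, hpX, hpY⟩ v hv h1 h2
    have hpz1 : (inner ℝ v (p - z) : ℝ) ≤ 0 := h1 p (intrinsicInterior_subset hpX)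
    have hpz2 : (0:ℝ) ≤ inner ℝ v (p - z) := h2 p (intrinsicInterior_subset hpY)
    have hpz : (inner ℝ v (p - z) : ℝ) = 0 := le_antisymm hpz1 hpz2
    have hXeq : ∀ x ∈ X, (inner ℝ v (x - p) : ℝ) = 0 :=
      inner_eq_zero_of_intrinsic_max hpX h1 hpz
    have hYeq : ∀ y ∈ Y, (inner ℝ v (y - p) : ℝ) = 0 := by
      intro y hy
      have := inner_eq_zero_of_intrinsic_max (v := -v) hpY
        (fun w hw => by rw [inner_neg_left]; linarith [h2 w hw])
        (by rw [inner_neg_left, hpz]; ring) y hy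
      rw [inner_neg_left] at this
      linarith
    have hker : Submodule.span ℝ ((fun w => w - z) '' (X ∪ Y)) ≤
        LinearMap.ker ((innerSL ℝ v : E →L[ℝ] ℝ) : E →ₗ[ℝ] ℝ) := by
      apply Submodule.span_le.2
      rintro _ ⟨w, hw, rfl⟩
      have hwp : (inner ℝ v (w - p) : ℝ) = 0 := by
        rcases hw with hw | hw
        · exact hXeq w hw
        · exact hYeq w hw
      have : (inner ℝ v (w - z) : ℝ) = inner ℝ v (w - p) + inner ℝ v (p - z) := by
        rw [← inner_add_right]
        congr 1
        abel
      simp only [SetLike.mem_coe, LinearMap.mem_ker, ContinuousLinearMap.coe_coe, innerSL_apply_apply]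
      rw [real_inner_comm] at this ⊢
      rw [this, hwp, hpz, add_zero]
    have hv0 : (inner ℝ v v : ℝ) = 0 := by
      have := hker hv
      simpa [LinearMap.mem_ker, innerSL_apply_apply] using this
    exact inner_self_eq_zero.1 hv0
end

section
/- (Limiting slope of distance-to-point restricted to a set) Let X ⊂ E be closed, x ∈ X, y ∉ X, u = (x-y)/|x-y|, and f = |· - y| + δ_X. Then the limiting slope satisfies |∇f|̄(x) = d(u, -N_X(x)) = d( (y-x)/|y-x| , N_X(x) ). -/
open Set Metric Filter
open scoped ENNReal Topology Classical

noncomputable section AuxProofs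
set_option linter.unusedSectionVars false

variable {E : Type*} [NormedAddCommGroup E] [InnerProductSpace ℝ E]


lemma unit_norm (a : E) (ha : a ≠ 0) : ‖(‖a‖⁻¹ • a)‖ = 1 := by
  rw [norm_smul, norm_inv, norm_norm, inv_mul_cancel₀ (norm_ne_zero_iff.2 ha)]

lemma inner_unit_self (a : E) (ha : a ≠ 0) : (inner ℝ (‖a‖⁻¹ • a) a : ℝ) = ‖a‖ := by
  have hna : (0:ℝ) < ‖a‖ := norm_pos_iff.2 ha
  rw [real_inner_smul_left, real_inner_self_eq_norm_sq]
  field_simp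

lemma norm_lower (a h : E) (ha : a ≠ 0) :
    ‖a‖ + inner ℝ (‖a‖⁻¹ • a) h ≤ ‖a + h‖ := by
  have h1 : (inner ℝ (‖a‖⁻¹ • a) (a + h) : ℝ) ≤ ‖a + h‖ := by
    calc (inner ℝ (‖a‖⁻¹ • a) (a + h) : ℝ) ≤ ‖(‖a‖⁻¹ • a)‖ * ‖a + h‖ := real_inner_le_norm _ _
    _ = ‖a + h‖ := by rw [unit_norm a ha, one_mul]
  rw [inner_add_right, inner_unit_self a ha] at h1
  linarith

private lemma real_aux (x na t nh : ℝ) (hna : 0 < na) (hx : 0 ≤ x) (hh : nh ≤ na)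
    (habs : |t| ≤ nh) (hsq : x ^ 2 = na ^ 2 + 2 * (na * t) + nh ^ 2) :
    x ≤ na + t + nh ^ 2 / (2 * na) := by
  have h1 : -nh ≤ t := neg_le_of_abs_le habs
  have h2 : 0 ≤ nh ^ 2 / (2 * na) := by positivity
  have hR0 : 0 ≤ na + t + nh ^ 2 / (2 * na) := by nlinarith
  have key : x ^ 2 ≤ (na + t + nh ^ 2 / (2 * na)) ^ 2 := by
    have hex : (na + t + nh ^ 2 / (2 * na)) ^ 2 - x ^ 2 = (t + nh ^ 2 / (2 * na)) ^ 2 := by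
      rw [hsq]
      field_simp
      ring
    nlinarith [sq_nonneg (t + nh ^ 2 / (2 * na))]
  nlinarith

lemma norm_upper (a h : E) (ha : a ≠ 0) (hh : ‖h‖ ≤ ‖a‖) :
    ‖a + h‖ ≤ ‖a‖ + inner ℝ (‖a‖⁻¹ • a) h + ‖h‖ ^ 2 / (2 * ‖a‖) := by
  have hna : (0:ℝ) < ‖a‖ := norm_pos_iff.2 ha
  have hth : (inner ℝ a h : ℝ) = ‖a‖ * (inner ℝ (‖a‖⁻¹ • a) h : ℝ) := by
    rw [real_inner_smul_left]; field_simp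
  have htabs : |(inner ℝ (‖a‖⁻¹ • a) h : ℝ)| ≤ ‖h‖ := by
    have := abs_real_inner_le_norm (‖a‖⁻¹ • a) h
    rwa [unit_norm a ha, one_mul] at this
  refine real_aux _ _ _ _ hna (norm_nonneg _) hh htabs ?_
  rw [norm_add_sq_real, hth]



lemma proxNormal_ineq {X : Set E} {w p : E} (hp : p ∈ proxNormalCone X w) :
    ∃ σ : ℝ, 0 ≤ σ ∧ ∀ v ∈ X, (inner ℝ p (v - w) : ℝ) ≤ σ * ‖v - w‖ ^ 2 := by
  obtain ⟨l, u₀, hl, hpl, hwX, hdist⟩ := hp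
  refine ⟨l / 2, by linarith, fun v hv => ?_⟩
  have h1 : dist (w + u₀) w ≤ dist (w + u₀) v := by
    rw [hdist]; exact infDist_le_dist_of_mem hv
  have h2 : ‖u₀‖ ≤ ‖u₀ - (v - w)‖ := by
    have e1 : w + u₀ - w = u₀ := by abel
    have e2 : w + u₀ - v = u₀ - (v - w) := by abel
    rwa [dist_eq_norm, dist_eq_norm, e1, e2] at h1
  have h3 : ‖u₀‖ ^ 2 ≤ ‖u₀ - (v - w)‖ ^ 2 := by
    have := norm_nonneg u₀; nlinarith
  rw [norm_sub_sq_real] at h3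
  have h4 : (inner ℝ u₀ (v - w) : ℝ) ≤ ‖v - w‖ ^ 2 / 2 := by linarith
  rw [hpl, real_inner_smul_left]
  calc l * (inner ℝ u₀ (v - w) : ℝ) ≤ l * (‖v - w‖ ^ 2 / 2) := by
        exact mul_le_mul_of_nonneg_left h4 hl
  _ = l / 2 * ‖v - w‖ ^ 2 := by ring

lemma proxNormal_of_local {X : Set E} {w q : E} (hw : w ∈ X) (ρ σ : ℝ) (hρ : 0 < ρ) (hσ : 0 ≤ σ)
    (h : ∀ v ∈ X, ‖v - w‖ ≤ ρ → (inner ℝ q (v - w) : ℝ) ≤ σ * ‖v - w‖ ^ 2) :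
    q ∈ proxNormalCone X w := by
  obtain ⟨σ', hσ'⟩ : ∃ σ' : ℝ, σ' = σ + ‖q‖ / ρ + 1 := ⟨_, rfl⟩
  have hσ'0 : 0 < σ' := by rw [hσ']; positivity
  have hs1 : σ ≤ σ' := by
    rw [hσ']; have := div_nonneg (norm_nonneg q) hρ.le; linarith
  have hs2 : ‖q‖ / ρ ≤ σ' := by
    rw [hσ']; nlinarith [hσ]
  have hglob : ∀ v ∈ X, (inner ℝ q (v - w) : ℝ) ≤ σ' * ‖v - w‖ ^ 2 := by
    intro v hv
    rcases le_or_gt ‖v - w‖ ρ with hle | hgt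
    · calc (inner ℝ q (v - w) : ℝ) ≤ σ * ‖v - w‖ ^ 2 := h v hv hle
      _ ≤ σ' * ‖v - w‖ ^ 2 := by nlinarith [sq_nonneg ‖v - w‖]
    · calc (inner ℝ q (v - w) : ℝ) ≤ ‖q‖ * ‖v - w‖ := real_inner_le_norm _ _
      _ ≤ (‖q‖ / ρ) * ‖v - w‖ ^ 2 := by
          rw [div_mul_eq_mul_div, le_div_iff₀ hρ]
          nlinarith [mul_nonneg (mul_nonneg (norm_nonneg q) (norm_nonneg (v - w)))
            (sub_nonneg.2 hgt.le)]
      _ ≤ σ' * ‖v - w‖ ^ 2 := by nlinarith [sq_nonneg ‖v - w‖]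
  refine ⟨2 * σ', (2 * σ')⁻¹ • q, by positivity, ?_, hw, ?_⟩
  · rw [smul_smul, mul_inv_cancel₀ (by positivity), one_smul]
  · obtain ⟨u₀, hu₀⟩ : ∃ u₀ : E, u₀ = (2 * σ')⁻¹ • q := ⟨_, rfl⟩
    rw [← hu₀]
    have hkey : ∀ v ∈ X, dist (w + u₀) w ≤ dist (w + u₀) v := by
      intro v hv
      have h5 : (inner ℝ u₀ (v - w) : ℝ) ≤ ‖v - w‖ ^ 2 / 2 := by
        rw [hu₀, real_inner_smul_left]
        rw [inv_mul_le_iff₀ (by positivity)]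
        calc (inner ℝ q (v - w) : ℝ) ≤ σ' * ‖v - w‖ ^ 2 := hglob v hv
        _ = 2 * σ' * (‖v - w‖ ^ 2 / 2) := by ring
      have h6 : ‖u₀‖ ^ 2 ≤ ‖u₀ - (v - w)‖ ^ 2 := by
        rw [norm_sub_sq_real]; nlinarith [sq_nonneg ‖v - w‖]
      have e1 : w + u₀ - w = u₀ := by abel
      have e2 : w + u₀ - v = u₀ - (v - w) := by abel
      rw [dist_eq_norm, dist_eq_norm, e1, e2]
      nlinarith [norm_nonneg u₀, norm_nonneg (u₀ - (v - w))]
    refine le_antisymm ?_ (infDist_le_dist_of_mem hw)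
    have h7 : edist (w + u₀) w ≤ EMetric.infEdist (w + u₀) X :=
      EMetric.le_infEdist.2 fun v hv => by
        rw [edist_dist, edist_dist]; exact ENNReal.ofReal_le_ofReal (hkey v hv)
    have h8 : EMetric.infEdist (w + u₀) X ≠ ⊤ :=
      ne_top_of_le_ne_top (edist_ne_top _ _) (EMetric.infEdist_le_edist_of_mem hw)
    have := ENNReal.toReal_mono h8 h7
    rwa [← dist_edist] at this

lemma zero_mem_proxNormal {X : Set E} {w : E} (hw : w ∈ X) : (0:E) ∈ proxNormalCone X w := by
  refine ⟨0, 0, le_refl _, by simp, hw, ?_⟩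
  simp [infDist_zero_of_mem hw]



lemma f_mem {X : Set E} {y w : E} (hw : w ∈ X) :
    (‖w - y‖ : EReal) + eindicator X w = ((‖w - y‖ : ℝ) : EReal) := by
  simp [eindicator, hw]

lemma f_not_mem {X : Set E} {y w : E} (hw : w ∉ X) :
    (‖w - y‖ : EReal) + eindicator X w = ⊤ := by
  simp [eindicator, hw]

lemma filter_eq (X : Set E) (x y : E) (hx : x ∈ X) :
    𝓝 x ⊓ Filter.comap (fun w => (‖w - y‖ : EReal) + eindicator X w)
      (𝓝 ((‖x - y‖ : EReal) + eindicator X x)) = 𝓝[X] x := by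
  have fx : (‖x - y‖ : EReal) + eindicator X x = ((‖x - y‖ : ℝ) : EReal) := f_mem hx
  apply le_antisymm
  · have le1 : Filter.comap (fun w => (‖w - y‖ : EReal) + eindicator X w)
        (𝓝 ((‖x - y‖ : EReal) + eindicator X x)) ≤ 𝓟 X := by
      rw [Filter.le_principal_iff]
      refine Filter.mem_comap.2 ⟨Iio ⊤, ?_, ?_⟩
      · rw [fx]; exact Iio_mem_nhds (EReal.coe_lt_top _)
      · intro w hwmem
        by_contra hwX
        simp only [mem_preimage, f_not_mem hwX, mem_Iio, lt_self_iff_false] at hwmem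
    rw [nhdsWithin]
    exact le_inf inf_le_left (le_trans inf_le_right le1)
  · refine le_inf nhdsWithin_le_nhds ?_
    rw [← Filter.tendsto_iff_comap]
    have hcont : Tendsto (fun w : E => ((‖w - y‖ : ℝ) : EReal)) (𝓝[X] x)
        (𝓝 ((‖x - y‖ : ℝ) : EReal)) := by
      apply Filter.Tendsto.mono_left _ nhdsWithin_le_nhds
      exact (continuous_coe_real_ereal.comp ((continuous_id.sub continuous_const).norm)).tendsto x
    rw [fx]
    apply hcont.congr'
    filter_upwards [self_mem_nhdsWithin] with w hw
    exact (f_mem hw).symm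

lemma slop_le {X : Set E} {y : E} (hy : y ∉ X) {w : E} (hw : w ∈ X)
    {p : E} (hp : p ∈ proxNormalCone X w) :
    slop (fun v => (‖v - y‖ : EReal) + eindicator X v) w ≤
      ENNReal.ofReal ‖‖w - y‖⁻¹ • (w - y) + p‖ := by
  obtain ⟨σ, hσ0, hσ⟩ := proxNormal_ineq hp
  have hwy : w - y ≠ 0 := sub_ne_zero.2 (fun h => hy (h ▸ hw))
  have key : ∀ v ∈ X, ‖w - y‖ - ‖v - y‖ ≤
      ‖‖w - y‖⁻¹ • (w - y) + p‖ * ‖v - w‖ + σ * ‖v - w‖ ^ 2 := by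
    intro v hv
    have h1 := norm_lower (w - y) (v - w) hwy
    have e : (w - y) + (v - w) = v - y := by abel
    rw [e] at h1
    have h2 : (inner ℝ p (v - w) : ℝ) ≤ σ * ‖v - w‖ ^ 2 := hσ v hv
    have h3 : (inner ℝ (‖w - y‖⁻¹ • (w - y) + p) (-(v - w)) : ℝ) ≤
        ‖‖w - y‖⁻¹ • (w - y) + p‖ * ‖v - w‖ := by
      calc (inner ℝ (‖w - y‖⁻¹ • (w - y) + p) (-(v - w)) : ℝ) ≤
          ‖‖w - y‖⁻¹ • (w - y) + p‖ * ‖-(v - w)‖ := real_inner_le_norm _ _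
      _ = ‖‖w - y‖⁻¹ • (w - y) + p‖ * ‖v - w‖ := by rw [norm_neg]
    rw [inner_add_left, inner_neg_right, inner_neg_right] at h3
    linarith
  have main : ∀ ε : ℝ, 0 < ε → slop (fun v => (‖v - y‖ : EReal) + eindicator X v) w ≤
      ENNReal.ofReal (‖‖w - y‖⁻¹ • (w - y) + p‖ + ε) := by
    intro ε hε
    apply Filter.limsup_le_of_le (by isBoundedDefault)
    have hδ : (0:ℝ) < ε / (σ + 1) := by positivity
    filter_upwards [mem_nhdsWithin_of_mem_nhds (ball_mem_nhds w hδ), self_mem_nhdsWithin]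
      with v hvball hvne
    simp only [mem_compl_iff, mem_singleton_iff] at hvne
    by_cases hvX : v ∈ X
    · rw [f_mem hvX, f_mem hw, ← EReal.coe_sub, EReal.toReal_coe]
      apply ENNReal.ofReal_le_ofReal
      have hd : (0:ℝ) < dist w v := dist_pos.2 (fun h => hvne h.symm)
      rw [div_le_iff₀ hd]
      have hdist : dist w v = ‖v - w‖ := by rw [dist_eq_norm, norm_sub_rev]
      have hvd : ‖v - w‖ < ε / (σ + 1) := by
        rw [mem_ball, dist_eq_norm] at hvball; exact hvball
      have hvd' : ‖v - w‖ * (σ + 1) < ε := (lt_div_iff₀ (by positivity)).1 hvd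
      have h2 : σ * ‖v - w‖ ^ 2 ≤ ε * ‖v - w‖ := by
        nlinarith [mul_le_mul_of_nonneg_right hvd'.le (norm_nonneg (v - w)),
          sq_nonneg ‖v - w‖, norm_nonneg (v - w)]
      have h3 := key v hvX
      rw [hdist]
      nlinarith [norm_nonneg (v - w)]
    · rw [f_not_mem hvX, f_mem hw, EReal.sub_top]
      simp
  refine ENNReal.le_of_forall_pos_le_add fun ε hε _ => ?_
  calc slop (fun v => (‖v - y‖ : EReal) + eindicator X v) w ≤
      ENNReal.ofReal (‖‖w - y‖⁻¹ • (w - y) + p‖ + ε) := main ε (by exact_mod_cast hε)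
  _ ≤ ENNReal.ofReal ‖‖w - y‖⁻¹ • (w - y) + p‖ + ENNReal.ofReal ε :=
      ENNReal.ofReal_add_le
  _ = ENNReal.ofReal ‖‖w - y‖⁻¹ • (w - y) + p‖ + ε := by
      rw [ENNReal.ofReal_coe_nnreal]

set_option maxHeartbeats 1000000 in
lemma key_subclaim {X : Set E} [FiniteDimensional ℝ E] (hX : IsClosed X) {y : E} (hy : y ∉ X)
    {w : E} (hw : w ∈ X) {r δ ε : ℝ} (hr : 0 < r) (hδ : 0 < δ) (hε : 0 < ε)
    (hlow : ∀ v ∈ X, ‖v - w‖ ≤ δ → ‖w - y‖ - ‖v - y‖ ≤ r * ‖v - w‖) :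
    ∃ v ∈ X, ‖v - w‖ ≤ ε ∧ ∃ q ∈ proxNormalCone X v,
      ‖‖v - y‖⁻¹ • (v - y) + q‖ ≤ r + ε := by
  obtain ⟨μ, hμdef⟩ : ∃ μ : ℝ, μ = min (δ/4) (ε/2) := ⟨_, rfl⟩
  have hμ : 0 < μ := by rw [hμdef]; positivity
  have hμδ : μ ≤ δ/4 := by rw [hμdef]; exact min_le_left _ _
  have hμε : μ ≤ ε/2 := by rw [hμdef]; exact min_le_right _ _
  obtain ⟨n, hndef⟩ : ∃ n : ℝ, n = max 1 ((2*r/μ)^2) := ⟨_, rfl⟩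
  have hn1 : (1:ℝ) ≤ n := by rw [hndef]; exact le_max_left _ _
  have hn0 : (0:ℝ) < n := by linarith
  obtain ⟨s, hsdef⟩ : ∃ s : ℝ, s = Real.sqrt n := ⟨_, rfl⟩
  have hs1 : (1:ℝ) ≤ s := by
    rw [hsdef, show (1:ℝ) = Real.sqrt 1 by simp]; exact Real.sqrt_le_sqrt hn1
  have hs0 : (0:ℝ) < s := by linarith
  have hssq : s ^ 2 = n := by rw [hsdef, Real.sq_sqrt hn0.le]
  have hsmu : 2*r/s ≤ μ := by
    have h1 : 2*r/μ ≤ s := by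
      rw [hsdef, hndef]
      calc 2*r/μ = Real.sqrt ((2*r/μ)^2) := by rw [Real.sqrt_sq (by positivity)]
      _ ≤ Real.sqrt (max 1 ((2*r/μ)^2)) := Real.sqrt_le_sqrt (le_max_right _ _)
    rw [div_le_iff₀ hs0]
    calc 2*r = (2*r/μ) * μ := by field_simp
    _ ≤ s * μ := by nlinarith
    _ = μ * s := by ring
  have hns : s ≤ n := by nlinarith
  obtain ⟨Φ, hΦdef⟩ : ∃ Φ : E × E → ℝ, Φ = fun p =>
      ‖p.1 - y‖ + r * ‖p.2 - w‖ + n/2 * ‖p.1 - p.2‖^2 + 1/2 * ‖p.1 - w‖^2 := ⟨_, rfl⟩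
  have hΦcont : Continuous Φ := by rw [hΦdef]; fun_prop
  obtain ⟨K, hKdef⟩ : ∃ K : Set (E × E), K = (X ∩ closedBall w δ) ×ˢ closedBall w δ := ⟨_, rfl⟩
  have hKcomp : IsCompact K := by
    rw [hKdef]
    exact ((isCompact_closedBall w δ).inter_left hX).prod (isCompact_closedBall w δ)
  have hwwK : ((w:E), (w:E)) ∈ K := by
    rw [hKdef]; exact ⟨⟨hw, mem_closedBall_self hδ.le⟩, mem_closedBall_self hδ.le⟩
  obtain ⟨⟨v', z'⟩, hmemK, hmin⟩ := hKcomp.exists_isMinOn ⟨_, hwwK⟩ hΦcont.continuousOn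
  rw [hKdef] at hmemK
  obtain ⟨⟨hv'X, hv'ball⟩, hz'ball⟩ := hmemK
  have hv'δ : ‖v' - w‖ ≤ δ := by rwa [mem_closedBall, dist_eq_norm] at hv'ball
  have hv'y : v' - y ≠ 0 := sub_ne_zero.2 (fun h => hy (h ▸ hv'X))
  have hv'ypos : (0:ℝ) < ‖v' - y‖ := norm_pos_iff.2 hv'y
  have hmin_ww : Φ (v', z') ≤ ‖w - y‖ := by
    have := hmin hwwK
    simpa [hΦdef] using this
  have hlow' : ‖w - y‖ - ‖v' - y‖ ≤ r * ‖v' - w‖ := hlow v' hv'X hv'δ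
  have htri : ‖v' - w‖ - ‖z' - w‖ ≤ ‖v' - z'‖ := by
    have := norm_sub_le_norm_sub_add_norm_sub v' z' w
    linarith
  have hbasic : r * ‖z' - w‖ + n/2 * ‖v' - z'‖^2 + 1/2 * ‖v' - w‖^2 ≤ r * ‖v' - w‖ := by
    rw [hΦdef] at hmin_ww; simp only [Set.mem_setOf_eq] at hmin_ww; linarith
  have hd1 : n/2 * ‖v' - z'‖^2 ≤ r * ‖v' - z'‖ := by
    nlinarith [sq_nonneg ‖v' - w‖, norm_nonneg (v' - z')]
  have hd : ‖v' - z'‖ ≤ 2*r/n := by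
    rcases eq_or_lt_of_le (norm_nonneg (v' - z')) with h | h
    · rw [← h]; positivity
    · rw [le_div_iff₀ hn0]; nlinarith
  have hh1 : 1/2 * ‖v' - w‖^2 ≤ r * ‖v' - z'‖ := by
    nlinarith [sq_nonneg ‖v' - z'‖, norm_nonneg (z' - w)]
  have hdn : n * ‖v' - z'‖ ≤ 2*r := by
    have := hd
    rw [le_div_iff₀ hn0] at this; linarith [this]
  have ha : ‖v' - w‖ ≤ 2*r/s := by
    have h2 : ‖v' - w‖^2 ≤ (2*r/s)^2 := by
      have h3 : ‖v' - w‖^2 ≤ 4*r^2/n := by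
        rw [le_div_iff₀ hn0]
        nlinarith [mul_le_mul_of_nonneg_left hdn (by linarith : (0:ℝ) ≤ 2*r),
          mul_le_mul_of_nonneg_right hh1 hn0.le]
      calc ‖v' - w‖^2 ≤ 4*r^2/n := h3
      _ = (2*r/s)^2 := by rw [div_pow, ← hssq]; ring_nf
    calc ‖v' - w‖ = Real.sqrt (‖v' - w‖^2) := by rw [Real.sqrt_sq (norm_nonneg _)]
    _ ≤ Real.sqrt ((2*r/s)^2) := Real.sqrt_le_sqrt h2
    _ = 2*r/s := Real.sqrt_sq (by positivity)
  have haμ : ‖v' - w‖ ≤ μ := le_trans ha hsmu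
  have hdμ : ‖v' - z'‖ ≤ μ := by
    calc ‖v' - z'‖ ≤ 2*r/n := hd
    _ ≤ 2*r/s := by apply div_le_div_of_nonneg_left (by linarith) hs0 hns
    _ ≤ μ := hsmu
  have hz'w : ‖z' - w‖ ≤ δ/2 := by
    have h4 := norm_sub_le_norm_sub_add_norm_sub z' v' w
    have h5 : ‖z' - v'‖ = ‖v' - z'‖ := norm_sub_rev _ _
    have : μ + μ ≤ δ/2 := by linarith
    linarith
  -- z'-optimality
  have hb : n * ‖v' - z'‖ ≤ r := by
    rcases eq_or_lt_of_le (norm_nonneg (v' - z')) with h | hcpos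
    · rw [← h]; simpa using hr.le
    · have hkey : ∀ t : ℝ, 0 < t → t * (n * ‖v' - z'‖) ≤ δ/2 →
          n^2 * ‖v' - z'‖^2 ≤ r * (n * ‖v' - z'‖) + n^3/2 * t * ‖v' - z'‖^2 := by
        intro t ht htδ
        have hnorm_t : ‖t • (n • (v' - z'))‖ = t * (n * ‖v' - z'‖) := by
          rw [norm_smul, norm_smul, Real.norm_eq_abs, Real.norm_eq_abs,
            abs_of_pos ht, abs_of_pos hn0]
        have e1 : ‖z' + t • (n • (v' - z')) - w‖ ≤ ‖z' - w‖ + t * (n * ‖v' - z'‖) := by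
          have e : z' + t • (n • (v' - z')) - w = (z' - w) + t • (n • (v' - z')) := by abel
          rw [e, ← hnorm_t]; exact norm_add_le _ _
        have hz2 : z' + t • (n • (v' - z')) ∈ closedBall w δ := by
          rw [mem_closedBall, dist_eq_norm]
          linarith [e1]
        have hmin2 := hmin (show (v', z' + t • (n • (v' - z'))) ∈ K by
          rw [hKdef]; exact ⟨⟨hv'X, hv'ball⟩, hz2⟩)
        rw [hΦdef] at hmin2; simp only [Set.mem_setOf_eq] at hmin2
        have e2 : ‖v' - (z' + t • (n • (v' - z')))‖^2 =
            ‖v' - z'‖^2 - 2 * (t*n) * ‖v' - z'‖^2 + (t*n)^2 * ‖v' - z'‖^2 := by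
          have e : v' - (z' + t • (n • (v' - z'))) = (1 - t*n) • (v' - z') := by
            rw [sub_smul, one_smul, smul_smul]; abel
          rw [e, norm_smul, Real.norm_eq_abs, mul_pow, sq_abs]
          ring
        have e2' : n/2 * ‖v' - (z' + t • (n • (v' - z')))‖^2 =
            n/2 * ‖v' - z'‖^2 - t * n^2 * ‖v' - z'‖^2 + n^3/2 * t^2 * ‖v' - z'‖^2 := by
          rw [e2]; ring
        have hstep : 0 ≤ r * (t * (n * ‖v' - z'‖)) - t * n^2 * ‖v' - z'‖^2
            + n^3/2 * t^2 * ‖v' - z'‖^2 := by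
          have e1r := mul_le_mul_of_nonneg_left e1 hr.le
          linarith [hmin2, e1r, e2']
        nlinarith [hstep, ht, mul_pos ht ht]
      by_contra hcon
      push_neg at hcon
      obtain ⟨t, htdef⟩ : ∃ t : ℝ, t = min (δ/(2*(n*‖v' - z'‖)))
          ((n * ‖v' - z'‖ - r) * (n * ‖v' - z'‖) / (n^3 * ‖v' - z'‖^2)) := ⟨_, rfl⟩
      have hnc : 0 < n * ‖v' - z'‖ := mul_pos hn0 hcpos
      have hrdiff : 0 < n * ‖v' - z'‖ - r := by linarith
      have ht0 : 0 < t := by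
        rw [htdef]; apply lt_min
        · positivity
        · positivity
      have htδ : t * (n * ‖v' - z'‖) ≤ δ/2 := by
        have h1 : t ≤ δ/(2*(n*‖v' - z'‖)) := by rw [htdef]; exact min_le_left _ _
        calc t * (n * ‖v' - z'‖) ≤ δ/(2*(n*‖v' - z'‖)) * (n * ‖v' - z'‖) :=
              mul_le_mul_of_nonneg_right h1 hnc.le
        _ = δ/2 := by field_simp
      have hk := hkey t ht0 htδ
      have h2 : t ≤ (n * ‖v' - z'‖ - r) * (n * ‖v' - z'‖) / (n^3 * ‖v' - z'‖^2) := by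
        rw [htdef]; exact min_le_right _ _
      have hpos : (0:ℝ) < n^3 * ‖v' - z'‖^2 := by positivity
      have h3 : n^3/2 * t * ‖v' - z'‖^2 ≤ (n * ‖v' - z'‖ - r) * (n * ‖v' - z'‖) / 2 := by
        have h5 := mul_le_mul_of_nonneg_left h2 (le_of_lt (by positivity : (0:ℝ) < n^3/2 * ‖v' - z'‖^2))
        calc n^3/2 * t * ‖v' - z'‖^2 = n^3/2 * ‖v' - z'‖^2 * t := by ring
        _ ≤ n^3/2 * ‖v' - z'‖^2 * ((n * ‖v' - z'‖ - r) * (n * ‖v' - z'‖) / (n^3 * ‖v' - z'‖^2)) := h5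
        _ = (n * ‖v' - z'‖ - r) * (n * ‖v' - z'‖) / 2 := by field_simp
      nlinarith
  -- v'-optimality gives a proximal normal
  obtain ⟨q, hqdef⟩ : ∃ q : E, q = -(‖v' - y‖⁻¹ • (v' - y)) - n • (v' - z') - (v' - w) := ⟨_, rfl⟩
  have hqprox : q ∈ proxNormalCone X v' := by
    obtain ⟨ρ, hρdef⟩ : ∃ ρ : ℝ, ρ = min (δ/2) ‖v' - y‖ := ⟨_, rfl⟩
    have hρ0 : 0 < ρ := by rw [hρdef]; exact lt_min (by linarith) hv'ypos
    refine proxNormal_of_local hv'X ρ (1/(2*‖v' - y‖) + n/2 + 1/2) hρ0 (by positivity) ?_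
    intro v hv hvρ
    have hvv1 : ‖v - v'‖ ≤ δ/2 := le_trans hvρ (by rw [hρdef]; exact min_le_left _ _)
    have hv'w2 : ‖v' - w‖ ≤ δ/2 := by linarith
    have hvδ : v ∈ closedBall w δ := by
      rw [mem_closedBall, dist_eq_norm]
      have := norm_sub_le_norm_sub_add_norm_sub v v' w
      linarith
    have hmin3 := hmin (show (v, z') ∈ K by rw [hKdef]; exact ⟨⟨hv, hvδ⟩, hz'ball⟩)
    rw [hΦdef] at hmin3; simp only [Set.mem_setOf_eq] at hmin3
    have hhle : ‖v - v'‖ ≤ ‖v' - y‖ := le_trans hvρ (by rw [hρdef]; exact min_le_right _ _)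
    have hup := norm_upper (v' - y) (v - v') hv'y hhle
    have he : (v' - y) + (v - v') = v - y := by abel
    rw [he] at hup
    have hdiv : ‖v - v'‖^2/(2*‖v' - y‖) = 1/(2*‖v' - y‖) * ‖v - v'‖^2 := by ring
    rw [hdiv] at hup
    have e3 : n/2 * ‖v - z'‖^2 = n/2 * ‖v' - z'‖^2
        + n * inner ℝ (v' - z') (v - v') + n/2 * ‖v - v'‖^2 := by
      have e : v - z' = (v' - z') + (v - v') := by abel
      rw [e, norm_add_sq_real]; ring
    have e4 : 1/2 * ‖v - w‖^2 = 1/2 * ‖v' - w‖^2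
        + inner ℝ (v' - w) (v - v') + 1/2 * ‖v - v'‖^2 := by
      have e : v - w = (v' - w) + (v - v') := by abel
      rw [e, norm_add_sq_real]; ring
    have hq1 : (inner ℝ q (v - v') : ℝ) = -(inner ℝ (‖v' - y‖⁻¹ • (v' - y)) (v - v') : ℝ)
        - n * (inner ℝ (v' - z') (v - v') : ℝ) - (inner ℝ (v' - w) (v - v') : ℝ) := by
      rw [hqdef]
      simp [inner_sub_left, inner_neg_left, real_inner_smul_left]
    rw [hq1]
    have hexpand : (1/(2*‖v' - y‖) + n/2 + 1/2) * ‖v - v'‖^2 =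
        1/(2*‖v' - y‖) * ‖v - v'‖^2 + n/2 * ‖v - v'‖^2 + 1/2 * ‖v - v'‖^2 := by ring
    rw [hexpand]
    linarith [hmin3, hup, e3, e4]
  refine ⟨v', hv'X, le_trans haμ (by linarith), q, hqprox, ?_⟩
  have e5 : ‖v' - y‖⁻¹ • (v' - y) + q = -(n • (v' - z')) - (v' - w) := by
    rw [hqdef]; abel
  rw [e5]
  have h6 : ‖-(n • (v' - z')) - (v' - w)‖ ≤ ‖n • (v' - z')‖ + ‖v' - w‖ := by
    calc ‖-(n • (v' - z')) - (v' - w)‖ ≤ ‖-(n • (v' - z'))‖ + ‖v' - w‖ := norm_sub_le _ _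
    _ = ‖n • (v' - z')‖ + ‖v' - w‖ := by rw [norm_neg]
  have h7 : ‖n • (v' - z')‖ = n * ‖v' - z'‖ := by
    rw [norm_smul, Real.norm_eq_abs, abs_of_pos hn0]
  have h8 : ‖v' - w‖ ≤ ε/2 := by linarith
  linarith [h6, h7.le, h7.ge, hb]


end AuxProofs


theorem limSlope_of_restricted_distance {E : Type*} [NormedAddCommGroup E]
    [InnerProductSpace ℝ E] [FiniteDimensional ℝ E] (X : Set E) (hX : IsClosed X)
    (x y : E) (hx : x ∈ X) (hy : y ∉ X) :
    limSlope (fun w => (‖w - y‖ : EReal) + eindicator X w) x =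
        EMetric.infEdist (‖x - y‖⁻¹ • (x - y)) (-(limNormalCone X x)) ∧
    limSlope (fun w => (‖w - y‖ : EReal) + eindicator X w) x =
        EMetric.infEdist (‖y - x‖⁻¹ • (y - x)) (limNormalCone X x) := by
  classical
  have hxy : x - y ≠ 0 := sub_ne_zero.2 (fun h => hy (h ▸ hx))
  have hxypos : (0:ℝ) < ‖x - y‖ := norm_pos_iff.2 hxy
  haveI : (𝓝[X] x).NeBot := mem_closure_iff_nhdsWithin_neBot.mp (subset_closure hx)
  -- notation
  obtain ⟨g, hgdef⟩ : ∃ g : E → E, g = fun w => ‖w - y‖⁻¹ • (w - y) := ⟨_, rfl⟩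
  have hgx : g x = ‖x - y‖⁻¹ • (x - y) := by rw [hgdef]
  have hgcont : Tendsto g (𝓝 x) (𝓝 (‖x - y‖⁻¹ • (x - y))) := by
    rw [hgdef, ← hgdef, hgdef]
    have h1 : ContinuousAt (fun w : E => ‖w - y‖⁻¹) x :=
      (((continuousAt_id.sub continuousAt_const).norm).inv₀ hxypos.ne')
    have h2 : ContinuousAt (fun w : E => w - y) x := continuousAt_id.sub continuousAt_const
    exact h1.smul h2
  -- the filter in the liminf is 𝓝[X] x
  have hLS : limSlope (fun w => (‖w - y‖ : EReal) + eindicator X w) x =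
      Filter.liminf (slop (fun w => (‖w - y‖ : EReal) + eindicator X w)) (𝓝[X] x) := by
    rw [limSlope, filter_eq X x y hx]
  -- first inequality : limSlope ≤ infEdist
  have le1 : limSlope (fun w => (‖w - y‖ : EReal) + eindicator X w) x ≤
      EMetric.infEdist (‖x - y‖⁻¹ • (x - y)) (-(limNormalCone X x)) := by
    rw [hLS]
    refine EMetric.le_infEdist.2 fun b hb => ?_
    rw [Set.mem_neg] at hb
    obtain ⟨xs, vs, hvs, hxs, hxst, hvst⟩ := hb
    have hxsF : Tendsto xs atTop (𝓝[X] x) :=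
      tendsto_nhdsWithin_iff.2 ⟨hxst, Filter.Eventually.of_forall hxs⟩
    have hedist : edist (‖x - y‖⁻¹ • (x - y)) b =
        ENNReal.ofReal ‖‖x - y‖⁻¹ • (x - y) + -b‖ := by
      rw [edist_dist, dist_eq_norm, sub_eq_add_neg]
    rw [hedist]
    refine ENNReal.le_of_forall_pos_le_add fun ε hε _ => ?_
    have hnt : Tendsto (fun nn => ‖g (xs nn) + vs nn‖) atTop
        (𝓝 ‖‖x - y‖⁻¹ • (x - y) + -b‖) := by
      exact ((hgcont.comp hxst).add hvst).norm
    have hev : ∀ᶠ nn in atTop, ‖g (xs nn) + vs nn‖ < ‖‖x - y‖⁻¹ • (x - y) + -b‖ + ε := by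
      refine hnt.eventually_lt_const ?_
      have : (0:ℝ) < ε := hε
      linarith
    have hevS : ∀ᶠ nn in atTop,
        slop (fun w => (‖w - y‖ : EReal) + eindicator X w) (xs nn) ≤
        ENNReal.ofReal (‖‖x - y‖⁻¹ • (x - y) + -b‖ + ε) := by
      filter_upwards [hev] with nn hnn
      calc slop (fun w => (‖w - y‖ : EReal) + eindicator X w) (xs nn) ≤
          ENNReal.ofReal ‖‖xs nn - y‖⁻¹ • (xs nn - y) + vs nn‖ :=
            slop_le hy (hxs nn) (hvs nn)
      _ ≤ ENNReal.ofReal (‖‖x - y‖⁻¹ • (x - y) + -b‖ + ε) := by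
          apply ENNReal.ofReal_le_ofReal
          have : g (xs nn) = ‖xs nn - y‖⁻¹ • (xs nn - y) := by rw [hgdef]
          rw [← this]
          exact hnn.le
    have hfreq : ∃ᶠ w in 𝓝[X] x,
        slop (fun w => (‖w - y‖ : EReal) + eindicator X w) w ≤
        ENNReal.ofReal (‖‖x - y‖⁻¹ • (x - y) + -b‖ + ε) :=
      hxsF.frequently hevS.frequently
    calc Filter.liminf (slop (fun w => (‖w - y‖ : EReal) + eindicator X w)) (𝓝[X] x) ≤
        ENNReal.ofReal (‖‖x - y‖⁻¹ • (x - y) + -b‖ + ε) :=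
          Filter.liminf_le_of_frequently_le' hfreq
    _ ≤ ENNReal.ofReal ‖‖x - y‖⁻¹ • (x - y) + -b‖ + ENNReal.ofReal ε := ENNReal.ofReal_add_le
    _ = ENNReal.ofReal ‖‖x - y‖⁻¹ • (x - y) + -b‖ + ε := by rw [ENNReal.ofReal_coe_nnreal]
  -- second inequality : infEdist ≤ limSlope
  have le2 : EMetric.infEdist (‖x - y‖⁻¹ • (x - y)) (-(limNormalCone X x)) ≤
      limSlope (fun w => (‖w - y‖ : EReal) + eindicator X w) x := by
    rw [hLS]
    refine ENNReal.le_of_forall_pos_le_add fun ε hε hfin => ?_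
    obtain ⟨L, hLdef⟩ : ∃ L : ℝ≥0∞,
        L = Filter.liminf (slop (fun w => (‖w - y‖ : EReal) + eindicator X w)) (𝓝[X] x) :=
      ⟨_, rfl⟩
    rw [← hLdef] at hfin ⊢
    obtain ⟨r, hrdef⟩ : ∃ r : ℝ, r = L.toReal + (ε:ℝ)/2 := ⟨_, rfl⟩
    have hε0 : (0:ℝ) < ε := hε
    have hr0 : 0 < r := by
      rw [hrdef]; have := ENNReal.toReal_nonneg (a := L); linarith
    have hLr : L < ENNReal.ofReal r := by
      conv_lhs => rw [← ENNReal.ofReal_toReal hfin.ne]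
      rw [ENNReal.ofReal_lt_ofReal_iff hr0, hrdef]
      linarith
    have hfreq : ∃ᶠ w in 𝓝[X] x,
        slop (fun w => (‖w - y‖ : EReal) + eindicator X w) w < ENNReal.ofReal r := by
      by_contra hcon
      rw [Filter.not_frequently] at hcon
      have : ENNReal.ofReal r ≤ L := by
        rw [hLdef]
        refine Filter.le_liminf_of_le (by isBoundedDefault) ?_
        filter_upwards [hcon] with w hw
        exact not_lt.1 hw
      exact absurd this (not_le.2 hLr)
    -- extract a sequence of proximal normals
    have hstep : ∀ k : ℕ, ∃ v ∈ X, ‖v - x‖ ≤ 2/(k+1) ∧ ∃ q ∈ proxNormalCone X v,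
        ‖‖v - y‖⁻¹ • (v - y) + q‖ ≤ r + 1/(k+1) := by
      intro k
      have hk1 : (0:ℝ) < 1/((k:ℝ)+1) := by positivity
      have hmemev : ∀ᶠ w in 𝓝[X] x, w ∈ X ∧ dist w x < 1/((k:ℝ)+1) := by
        refine Filter.Eventually.and ?_ ?_
        · exact eventually_mem_nhdsWithin
        · exact mem_nhdsWithin_of_mem_nhds (Metric.eventually_nhds_iff.2
            ⟨1/((k:ℝ)+1), hk1, fun v hv => hv⟩)
      obtain ⟨w, hwS, hwX, hwx⟩ := (hfreq.and_eventually hmemev).exists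
      -- slope bound gives a local linear lower estimate
      have hev2 : ∀ᶠ v in 𝓝[≠] w, ENNReal.ofReal
          ((((‖w - y‖ : EReal) + eindicator X w) -
            ((‖v - y‖ : EReal) + eindicator X v)).toReal / dist w v) < ENNReal.ofReal r :=
        Filter.eventually_lt_of_limsup_lt hwS
      rw [eventually_nhdsWithin_iff, Metric.eventually_nhds_iff] at hev2
      obtain ⟨δ, hδ0, hδ⟩ := hev2
      have hlow : ∀ v ∈ X, ‖v - w‖ ≤ δ/2 → ‖w - y‖ - ‖v - y‖ ≤ r * ‖v - w‖ := by
        intro v hvX hvw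
        rcases eq_or_ne v w with rfl | hvne
        · simp
        · have hdlt : dist v w < δ := by
            rw [dist_eq_norm]; linarith
          have h3 := hδ hdlt (by simpa using hvne)
          rw [f_mem hvX, f_mem hwX, ← EReal.coe_sub, EReal.toReal_coe] at h3
          have hq : (‖w - y‖ - ‖v - y‖) / dist w v < r := by
            by_contra hq2
            push_neg at hq2
            exact absurd (ENNReal.ofReal_le_ofReal hq2) (not_le.2 h3)
          have hdpos : 0 < dist w v := dist_pos.2 (Ne.symm hvne)
          rw [div_lt_iff₀ hdpos] at hq
          have : dist w v = ‖v - w‖ := by rw [dist_eq_norm, norm_sub_rev]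
          rw [this] at hq
          linarith
      obtain ⟨v, hvX, hvw, q, hq, hqb⟩ :=
        key_subclaim hX hy hwX hr0 (by linarith : (0:ℝ) < δ/2) hk1 hlow
      refine ⟨v, hvX, ?_, q, hq, hqb⟩
      have h4 : ‖v - x‖ ≤ ‖v - w‖ + ‖w - x‖ := norm_sub_le_norm_sub_add_norm_sub v w x
      have h5 : ‖w - x‖ < 1/((k:ℝ)+1) := by rwa [← dist_eq_norm]
      have : (2:ℝ)/((k:ℝ)+1) = 1/((k:ℝ)+1) + 1/((k:ℝ)+1) := by ring
      rw [this]
      linarith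
    choose vs hvsX hvsx qs hqsP hqsb using hstep
    -- vs tends to x
    have hvst : Tendsto vs atTop (𝓝 x) := by
      rw [tendsto_iff_dist_tendsto_zero]
      refine squeeze_zero (g := fun k : ℕ => 2/((k:ℝ)+1)) (fun k => dist_nonneg) (fun k => ?_) ?_
      · rw [dist_eq_norm]; exact hvsx k
      · have h6 : Tendsto (fun k : ℕ => 2 * (1/((k:ℝ)+1))) atTop (𝓝 (2 * 0)) :=
          tendsto_one_div_add_atTop_nhds_zero_nat.const_mul 2
        simpa [div_eq_mul_inv] using h6
    -- qs is bounded; extract a convergent subsequence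
    have hqbdd : ∀ k, qs k ∈ closedBall (0:E) (r + 2) := by
      intro k
      rw [mem_closedBall, dist_eq_norm, sub_zero]
      have hvy : vs k - y ≠ 0 := sub_ne_zero.2 (fun h => hy (h ▸ hvsX k))
      have h7 : ‖‖vs k - y‖⁻¹ • (vs k - y)‖ = 1 := unit_norm _ hvy
      have h8 := hqsb k
      have h9 : ‖qs k‖ ≤ ‖‖vs k - y‖⁻¹ • (vs k - y) + qs k‖ + ‖‖vs k - y‖⁻¹ • (vs k - y)‖ := by
        calc ‖qs k‖ = ‖(‖vs k - y‖⁻¹ • (vs k - y) + qs k) - ‖vs k - y‖⁻¹ • (vs k - y)‖ := by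
              rw [add_sub_cancel_left]
        _ ≤ ‖‖vs k - y‖⁻¹ • (vs k - y) + qs k‖ + ‖‖vs k - y‖⁻¹ • (vs k - y)‖ := norm_sub_le _ _
      have h10 : (1:ℝ)/((k:ℝ)+1) ≤ 1 := by
        rw [div_le_one (by positivity)]
        have : (0:ℝ) ≤ (k:ℝ) := Nat.cast_nonneg k
        linarith
      rw [h7] at h9
      linarith
    obtain ⟨p, _, φ, hφmono, hφtend⟩ := (isCompact_closedBall (0:E) (r+2)).tendsto_subseq hqbdd
    have hpN : p ∈ limNormalCone X x :=
      ⟨vs ∘ φ, qs ∘ φ, fun j => hqsP (φ j), fun j => hvsX (φ j),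
        hvst.comp hφmono.tendsto_atTop, hφtend⟩
    -- pass to the limit in the norm bound
    have hnormlim : Tendsto (fun j => ‖‖vs (φ j) - y‖⁻¹ • (vs (φ j) - y) + qs (φ j)‖) atTop
        (𝓝 ‖‖x - y‖⁻¹ • (x - y) + p‖) := by
      have h11 : Tendsto (vs ∘ φ) atTop (𝓝 x) := hvst.comp hφmono.tendsto_atTop
      have h12 : Tendsto (fun j => g (vs (φ j))) atTop (𝓝 (‖x - y‖⁻¹ • (x - y))) :=
        hgcont.comp h11
      have h13 := (h12.add hφtend).norm
      refine h13.congr fun j => ?_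
      simp [hgdef, Function.comp]
    have hup : ‖‖x - y‖⁻¹ • (x - y) + p‖ ≤ r := by
      have hb2 : Tendsto (fun j : ℕ => r + 1/((j:ℝ)+1)) atTop (𝓝 (r + 0)) :=
        tendsto_const_nhds.add tendsto_one_div_add_atTop_nhds_zero_nat
      have hle := le_of_tendsto_of_tendsto' hnormlim hb2 ?_
      · simpa using hle
      intro j
      calc ‖‖vs (φ j) - y‖⁻¹ • (vs (φ j) - y) + qs (φ j)‖ ≤ r + 1/((φ j : ℝ)+1) := hqsb (φ j)
      _ ≤ r + 1/((j:ℝ)+1) := by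
          have h14 : (j:ℝ) + 1 ≤ (φ j : ℝ) + 1 := by
            have : (j:ℝ) ≤ (φ j : ℝ) := by exact_mod_cast hφmono.le_apply
            linarith
          have h15 : (0:ℝ) < (j:ℝ) + 1 := by positivity
          have := one_div_le_one_div_of_le h15 h14
          linarith
    calc EMetric.infEdist (‖x - y‖⁻¹ • (x - y)) (-(limNormalCone X x)) ≤
        edist (‖x - y‖⁻¹ • (x - y)) (-p) :=
          EMetric.infEdist_le_edist_of_mem (Set.mem_neg.2 (by rwa [neg_neg]))
    _ = ENNReal.ofReal ‖‖x - y‖⁻¹ • (x - y) + p‖ := by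
        rw [edist_dist, dist_eq_norm, sub_neg_eq_add]
    _ ≤ ENNReal.ofReal r := ENNReal.ofReal_le_ofReal hup
    _ ≤ L + ε := by
        rw [hrdef, ENNReal.ofReal_add ENNReal.toReal_nonneg (by positivity),
          ENNReal.ofReal_toReal hfin.ne]
        gcongr
        calc ENNReal.ofReal ((ε:ℝ)/2) ≤ ENNReal.ofReal (ε:ℝ) := by
              apply ENNReal.ofReal_le_ofReal; linarith
        _ = (ε : ℝ≥0∞) := ENNReal.ofReal_coe_nnreal
  have main : limSlope (fun w => (‖w - y‖ : EReal) + eindicator X w) x =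
      EMetric.infEdist (‖x - y‖⁻¹ • (x - y)) (-(limNormalCone X x)) :=
    le_antisymm le1 le2
  refine ⟨main, ?_⟩
  rw [main]
  have hneg : EMetric.infEdist (‖x - y‖⁻¹ • (x - y)) (-(limNormalCone X x)) =
      EMetric.infEdist (-(‖x - y‖⁻¹ • (x - y))) (limNormalCone X x) := by
    have h16 := EMetric.infEdist_image (x := -(‖x - y‖⁻¹ • (x - y)))
      (t := limNormalCone X x) (isometry_neg : Isometry (Neg.neg : E → E))
    rw [Set.image_neg_eq_neg, neg_neg] at h16
    exact h16
  rw [hneg]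
  rw [show -(‖x - y‖⁻¹ • (x - y)) = ‖y - x‖⁻¹ • (y - x) by
    rw [norm_sub_rev x y, ← smul_neg, neg_sub]]
end
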